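/- arXiv:2008.13376 — 3 statements merged into one kernel-verified Lean document; each statement's English description precedes it below -/
import Mathlib

section
/- Let R be an integral domain that is local (with maximal ideal m_R and residue field k = R/m_R) and integrally closed in its field of fractions K. Let f ∈ R[z] be a polynomial in one variable such that the image of f in k[z] is nonzero and such that f splits into a product of polynomials of degree 1 in K[z]. Then there exist integers m, n ≥ 0, elements a_1, …, a_m ∈ R, elements b_1, …, b_n ∈ m_R, and a unit c ∈ R^× such that f = c · ∏_{i=1}^m (z − a_i) · ∏_{j=1}^n (1 − b_j·z) in R[z]. -/
open Polynomial

namespace Statement0Aux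

local instance (priority := 100) {Γ₀ : Type*} [LinearOrderedCommGroupWithZero Γ₀] :
    OrderBot Γ₀ where
  bot := 0
  bot_le _ := zero_le'

section Valuation

variable {K : Type*} [Field K] {Γ₀ : Type*} [LinearOrderedCommGroupWithZero Γ₀]

/-- The Gauss content of a polynomial w.r.t. a valuation. -/
noncomputable def vcont (v : Valuation K Γ₀) (p : K[X]) : Γ₀ :=
  p.support.sup fun i => v (p.coeff i)

lemma vcont_zero (v : Valuation K Γ₀) : vcont v (0 : K[X]) = 0 := by
  simp [vcont]; exact le_antisymm bot_le zero_le'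

lemma coeff_le_vcont (v : Valuation K Γ₀) (p : K[X]) (i : ℕ) : v (p.coeff i) ≤ vcont v p := by
  by_cases h : i ∈ p.support
  · exact Finset.le_sup (f := fun i => v (p.coeff i)) h
  · rw [Polynomial.notMem_support_iff.mp h, map_zero]
    exact zero_le'

lemma exists_argmax (v : Valuation K Γ₀) {p : K[X]} (hp : p ≠ 0) :
    ∃ i, v (p.coeff i) = vcont v p ∧ vcont v p ≠ 0 ∧
      ∀ k, i < k → v (p.coeff k) < vcont v p := by
  classical
  have hsupp : p.support.Nonempty := Polynomial.nonempty_support_iff.mpr hp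
  set F := p.support.filter (fun i => v (p.coeff i) = vcont v p) with hF
  have hFne : F.Nonempty := by
    obtain ⟨i, hi, hieq⟩ := Finset.exists_mem_eq_sup p.support hsupp (fun i => v (p.coeff i))
    exact ⟨i, Finset.mem_filter.mpr ⟨hi, hieq.symm⟩⟩
  have hmem : F.max' hFne ∈ F := F.max'_mem hFne
  rw [Finset.mem_filter] at hmem
  have hne : vcont v p ≠ 0 := by
    rw [← hmem.2]
    exact (Valuation.ne_zero_iff v).mpr (Polynomial.mem_support_iff.mp hmem.1)
  refine ⟨F.max' hFne, hmem.2, hne, fun k hk => ?_⟩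
  have hkF : k ∉ F := fun h => absurd (F.le_max' k h) (not_le.mpr hk)
  by_cases hks : k ∈ p.support
  · refine lt_of_le_of_ne (coeff_le_vcont v p k) ?_
    intro he
    exact hkF (Finset.mem_filter.mpr ⟨hks, he⟩)
  · rw [Polynomial.notMem_support_iff.mp hks, map_zero]
    exact zero_lt_iff.mpr hne

lemma vcont_mul_le (v : Valuation K Γ₀) (p q : K[X]) :
    vcont v p * vcont v q ≤ vcont v (p * q) := by
  rcases eq_or_ne p 0 with rfl | hp
  · rw [vcont_zero, zero_mul, zero_mul, vcont_zero]
  rcases eq_or_ne q 0 with rfl | hq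
  · rw [vcont_zero, mul_zero, mul_zero, vcont_zero]
  obtain ⟨i, hieq, hine, himax⟩ := exists_argmax v hp
  obtain ⟨j, hjeq, hjne, hjmax⟩ := exists_argmax v hq
  have hM : vcont v p * vcont v q ≠ 0 := mul_ne_zero hine hjne
  have key : v ((p * q).coeff (i + j)) = vcont v p * vcont v q := by
    rw [Polynomial.coeff_mul]
    have hmem : ((i, j) : ℕ × ℕ) ∈ Finset.HasAntidiagonal.antidiagonal (i + j) := by
      rw [Finset.HasAntidiagonal.mem_antidiagonal]
    have hmain : v (p.coeff (i, j).1 * q.coeff (i, j).2) = vcont v p * vcont v q := by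
      rw [map_mul, hieq, hjeq]
    rw [← Finset.add_sum_erase _ _ hmem, Valuation.map_add_eq_of_lt_left, hmain]
    rw [hmain]
    refine Valuation.map_sum_lt v hM ?_
    intro x hx
    rw [Finset.mem_erase, Finset.HasAntidiagonal.mem_antidiagonal] at hx
    rw [map_mul]
    rcases lt_trichotomy x.1 i with hlt | heq | hgt
    · have hx2 : j < x.2 := by omega
      exact lt_of_le_of_lt (mul_le_mul' (coeff_le_vcont v p x.1) le_rfl)
          (mul_lt_mul_of_pos_left (hjmax x.2 hx2) (zero_lt_iff.mpr hine))
    · exact absurd (by omega : x.2 = j) (fun h2 => hx.1 (Prod.ext heq h2))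
    · rw [mul_comm (v _) (v _), mul_comm (vcont v p) (vcont v q)]
      exact lt_of_le_of_lt (mul_le_mul' (coeff_le_vcont v q x.2) le_rfl)
          (mul_lt_mul_of_pos_left (himax x.1 hgt) (zero_lt_iff.mpr hjne))
  exact le_trans (le_of_eq key.symm) (coeff_le_vcont v (p * q) (i + j))

lemma vcont_C (v : Valuation K Γ₀) (c : K) : vcont v (C c) = v c := by
  rcases eq_or_ne c 0 with rfl | hc
  · simp only [map_zero, vcont, Polynomial.support_zero, Finset.sup_empty]
    exact le_antisymm bot_le zero_le'
  · rw [vcont, Polynomial.support_C hc, Finset.sup_singleton, Polynomial.coeff_C_zero]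

lemma max_le_vcont_linear (v : Valuation K Γ₀) (α : K) :
    max 1 (v α) ≤ vcont v (X - C α) := by
  refine max_le ?_ ?_
  · have h1 : ((X : K[X]) - C α).coeff 1 = 1 := by
      simp [Polynomial.coeff_sub, Polynomial.coeff_C]
    calc (1 : Γ₀) = v (((X : K[X]) - C α).coeff 1) := by rw [h1, map_one]
    _ ≤ _ := coeff_le_vcont v _ 1
  · have h0 : ((X : K[X]) - C α).coeff 0 = -α := by
      simp [Polynomial.coeff_sub]
    calc v α = v (((X : K[X]) - C α).coeff 0) := by rw [h0, Valuation.map_neg]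
    _ ≤ _ := coeff_le_vcont v _ 0

lemma vcont_aux (v : Valuation K Γ₀) (c : K) (s : Multiset K) :
    v c * (s.map fun α => max 1 (v α)).prod ≤
      vcont v (C c * (s.map fun α => X - C α).prod) := by
  induction s using Multiset.induction with
  | empty => simp [vcont_C]
  | cons α s ih =>
    simp only [Multiset.map_cons, Multiset.prod_cons]
    calc v c * (max 1 (v α) * (s.map fun α => max 1 (v α)).prod)
        = max 1 (v α) * (v c * (s.map fun α => max 1 (v α)).prod) := by rw [mul_left_comm]
      _ ≤ vcont v (X - C α) * vcont v (C c * (s.map fun α => X - C α).prod) :=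
          mul_le_mul' (max_le_vcont_linear v α) ih
      _ ≤ vcont v ((X - C α) * (C c * (s.map fun α => X - C α).prod)) := vcont_mul_le v _ _
      _ = vcont v (C c * ((X - C α) * (s.map fun α => X - C α).prod)) := by rw [mul_left_comm]

lemma prod_mem_valuationSubring (A : ValuationSubring K) (c : K) (s : Multiset K)
    (h : ∀ i, (C c * (s.map fun α => X - C α).prod).coeff i ∈ A)
    (t : Multiset K) (hts : t ≤ s) : c * t.prod ∈ A := by
  set v := A.valuation
  rw [← A.valuation_le_one_iff]
  have h1 : v (c * t.prod) ≤ v c * (s.map fun α => max 1 (v α)).prod := by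
    rw [map_mul]
    refine mul_le_mul' le_rfl ?_
    rw [map_multiset_prod]
    obtain ⟨u, rfl⟩ := Multiset.le_iff_exists_add.mp hts
    calc (t.map fun α => v α).prod ≤ (t.map fun α => max 1 (v α)).prod :=
          Multiset.prod_map_le_prod_map _ _ fun α _ => le_max_right 1 (v α)
      _ ≤ (t.map fun α => max 1 (v α)).prod * (u.map fun α => max 1 (v α)).prod :=
          le_mul_of_one_le_right' (Multiset.one_le_prod fun x hx => ?_)
      _ = ((t + u).map fun α => max 1 (v α)).prod := by
          rw [Multiset.map_add, Multiset.prod_add]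
    obtain ⟨α, _, rfl⟩ := Multiset.mem_map.mp hx
    exact le_max_left 1 (v α)
  refine le_trans h1 (le_trans (vcont_aux v c s) (Finset.sup_le fun i _ => ?_))
  exact (A.valuation_le_one_iff _).mpr (h i)

lemma isIntegral_of_forall_mem (A : Subring K) (x : K)
    (h : ∀ O : ValuationSubring K, A ≤ O.toSubring → x ∈ O) : IsIntegral A x := by
  by_contra hx
  have hx0 : x ≠ 0 := by rintro rfl; exact hx isIntegral_zero
  set y := x⁻¹ with hy
  set S : Subalgebra A K := Algebra.adjoin A {y} with hS
  set T : Subring K := S.toSubring with hT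
  have hyS : y ∈ S := Algebra.self_mem_adjoin_singleton A y
  have hyT : y ∈ T := hyS
  have hAT : A ≤ T := fun a ha => by
    exact S.algebraMap_mem ⟨a, ha⟩
  have hxint : x ∈ S → False := by
    intro hxS
    rw [hS, Algebra.adjoin_singleton_eq_range_aeval] at hxS
    obtain ⟨p, hp'⟩ := hxS
    have hp : Polynomial.aeval y p = x := hp'
    set g : Polynomial A := X * p - 1 with hg
    have hgy : Polynomial.aeval y g = 0 := by
      rw [hg, map_sub, map_mul, map_one, Polynomial.aeval_X, hp]
      rw [hy, inv_mul_cancel₀ hx0, sub_self]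
    have : Invertible y := invertibleOfNonzero (inv_ne_zero hx0)
    have hrev : Polynomial.aeval (⅟y) g.reverse = 0 := by
      rw [Polynomial.aeval_def] at hgy ⊢
      exact (Polynomial.eval₂_reverse_eq_zero_iff (algebraMap A K) y g).mpr hgy
    rw [invOf_eq_right_inv (by rw [hy, inv_mul_cancel₀ hx0])] at hrev
    have hc0 : g.coeff 0 = -1 := by
      simp [hg, Polynomial.coeff_sub, Polynomial.mul_coeff_zero]
    have htd : g.natTrailingDegree = 0 := by
      rw [Polynomial.natTrailingDegree_eq_zero]
      right
      rw [hc0]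
      exact neg_ne_zero.mpr one_ne_zero
    have hlc : g.reverse.leadingCoeff = -1 := by
      rw [Polynomial.reverse_leadingCoeff, Polynomial.trailingCoeff, htd, hc0]
    refine hx ⟨-g.reverse, ?_, ?_⟩
    · rw [Polynomial.Monic, Polynomial.leadingCoeff_neg, hlc, neg_neg]
    · rw [← Polynomial.aeval_def, map_neg, hrev, neg_zero]
  have hproper : Ideal.span {(⟨y, hyT⟩ : T)} ≠ ⊤ := by
    rw [Ne, Ideal.span_singleton_eq_top]
    rintro ⟨u, hu⟩
    have huy : ((u : T) : K) = y := congrArg Subtype.val hu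
    have h2 : ((u : T) : K) * (((u⁻¹ : Tˣ) : T) : K) = 1 := by
      exact_mod_cast congrArg Subtype.val u.mul_inv
    have hz : (((u⁻¹ : Tˣ) : T) : K) = x := by
      rw [huy] at h2
      rw [← inv_eq_of_mul_eq_one_right h2, hy, inv_inv]
    exact hxint (hz ▸ ((u⁻¹ : Tˣ) : T).2)
  obtain ⟨M, hMmax, hMle⟩ := Ideal.exists_le_maximal _ hproper
  haveI := hMmax.isPrime
  obtain ⟨B, hB⟩ := (LocalSubring.ofPrime T M).exists_le_valuationSubring
  have hSle : T ≤ (LocalSubring.ofPrime T M).toSubring := LocalSubring.le_ofPrime _ _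
  have hAB : A ≤ B.toSubring := le_trans hAT (le_trans hSle hB.1)
  have hxB : x ∈ B := h B hAB
  have hyB : y ∈ B.toSubring := hB.1 (hSle hyT)
  have hyunit : IsUnit (⟨y, hyB⟩ : B.toSubring) := by
    refine isUnit_iff_exists_inv.mpr ⟨⟨x, hxB⟩, Subtype.ext ?_⟩
    exact inv_mul_cancel₀ hx0
  have hyOunit : IsUnit (⟨y, hSle hyT⟩ : (LocalSubring.ofPrime T M).toSubring) := by
    haveI := hB.2
    refine (hB.2.1 _ ?_ : IsUnit (⟨y, hSle hyT⟩ : (LocalSubring.ofPrime T M).toSubring))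
    exact hyunit
  have : (⟨y, hyT⟩ : T) ∈ M.primeCompl := by
    refine (IsLocalization.AtPrime.isUnit_to_map_iff
      (LocalSubring.ofPrime T M).toSubring M (⟨y, hyT⟩ : T)).mp ?_
    exact hyOunit
  exact this (hMle (Ideal.subset_span (Set.mem_singleton _)))

end Valuation

section Helpers

lemma multiset_lift {α β : Type*} (f : α → β) (s : Multiset β) (h : ∀ x ∈ s, ∃ a, f a = x) :
    ∃ t : Multiset α, t.map f = s := by
  induction s using Multiset.induction with
  | empty => exact ⟨0, rfl⟩
  | cons x s ih =>
    obtain ⟨t, ht⟩ := ih (fun y hy => h y (Multiset.mem_cons_of_mem hy))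
    obtain ⟨a, ha⟩ := h x (Multiset.mem_cons_self x s)
    exact ⟨a ::ₘ t, by rw [Multiset.map_cons, ht, ha]⟩

lemma list_map_prod_fin {α M : Type*} [CommMonoid M] (g : α → M) :
    ∀ l : List α, (l.map g).prod = ∏ i : Fin l.length, g (l.get i) := by
  intro l
  induction l with
  | nil => simp
  | cons a l ih =>
    rw [List.map_cons, List.prod_cons, ih]
    simp only [List.length_cons]
    rw [Fin.prod_univ_succ]
    rfl

lemma multiset_map_prod_fin {α M : Type*} [CommMonoid M] (s : Multiset α) (g : α → M) :
    ∃ (n : ℕ) (a : Fin n → α), (s.map g).prod = ∏ i, g (a i) := by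
  refine ⟨s.toList.length, s.toList.get, ?_⟩
  conv_lhs => rw [← Multiset.coe_toList s]
  rw [Multiset.map_coe, Multiset.prod_coe]
  exact list_map_prod_fin g s.toList

lemma multiset_sum_mem_ideal {R : Type*} [CommRing R] (I : Ideal R) :
    ∀ T : Multiset R, (∀ r ∈ T, r ∈ I) → T.sum ∈ I := by
  intro T
  induction T using Multiset.induction with
  | empty => intro _; simp
  | cons x T ih =>
    intro h
    rw [Multiset.sum_cons]
    exact add_mem (h x (Multiset.mem_cons_self x T))
      (ih fun r hr => h r (Multiset.mem_cons_of_mem hr))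

lemma exists_unit_of_sum {R : Type*} [CommRing R] [IsLocalRing R] (T : Multiset R)
    (h : IsUnit T.sum) : ∃ r ∈ T, IsUnit r := by
  by_contra hall
  push_neg at hall
  refine mem_nonunits_iff.mp ?_ h
  rw [← IsLocalRing.mem_maximalIdeal]
  exact multiset_sum_mem_ideal _ T fun r hr =>
    (IsLocalRing.mem_maximalIdeal _).mpr (mem_nonunits_iff.mpr (hall r hr))

lemma reflect_reflect {R : Type*} [Semiring R] (N : ℕ) (p : R[X]) :
    (p.reflect N).reflect N = p := by
  ext i
  rw [Polynomial.coeff_reflect, Polynomial.coeff_reflect, Polynomial.revAt_invol]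

lemma reflect_one_linear {R : Type*} [Ring R] (b : R) :
    ((X : R[X]) - C b).reflect 1 = 1 - C b * X := by
  rw [Polynomial.reflect_sub, Polynomial.reflect_C, ← pow_one (X : R[X]),
    Polynomial.reflect_monomial]
  norm_num [Polynomial.revAt_le]

end Helpers

section Main

variable {R : Type*} [CommRing R] [IsDomain R] [IsLocalRing R] [IsIntegrallyClosed R]

lemma kronecker (f : R[X]) {s t : Multiset (FractionRing R)} (hts : t ≤ s)
    (hs : f.map (algebraMap R (FractionRing R)) =
      C (algebraMap R (FractionRing R) f.leadingCoeff) * (s.map fun α => X - C α).prod) :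
    ∃ r : R, algebraMap R (FractionRing R) r
      = algebraMap R (FractionRing R) f.leadingCoeff * t.prod := by
  set φ := algebraMap R (FractionRing R) with hφ
  have hinj : Function.Injective φ := IsFractionRing.injective R (FractionRing R)
  have hmem : ∀ O : ValuationSubring (FractionRing R), φ.range ≤ O.toSubring →
      φ f.leadingCoeff * t.prod ∈ O := by
    intro O hO
    refine prod_mem_valuationSubring O _ s (fun i => ?_) t hts
    rw [← hs, Polynomial.coeff_map]
    exact hO ⟨f.coeff i, rfl⟩
  have hint0 : IsIntegral φ.range (φ f.leadingCoeff * t.prod) :=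
    isIntegral_of_forall_mem _ _ hmem
  obtain ⟨q, hq, hq0⟩ := hint0
  set e : R ≃+* φ.range := RingEquiv.ofBijective φ.rangeRestrict
    ⟨fun a b hab => hinj (congrArg Subtype.val hab), φ.rangeRestrict_surjective⟩ with he
  have hint : IsIntegral R (φ f.leadingCoeff * t.prod) := by
    refine ⟨q.map (e.symm : φ.range ≃+* R).toRingHom, hq.map _, ?_⟩
    rw [Polynomial.eval₂_map]
    have hcomp : φ.comp (e.symm : φ.range ≃+* R).toRingHom
        = algebraMap φ.range (FractionRing R) := by
      refine RingHom.ext fun a => ?_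
      have h1 : φ (e.symm a) = ((e (e.symm a)) : FractionRing R) := rfl
      show φ (e.symm a) = _
      rw [h1, e.apply_symm_apply]
      rfl
    rw [hcomp]
    exact hq0
  exact IsIntegrallyClosed.isIntegral_iff.mp hint

lemma main (n : ℕ) : ∀ f : R[X], f.natDegree ≤ n →
    f.map (IsLocalRing.residue R) ≠ 0 →
    (f.map (algebraMap R (FractionRing R))).Splits →
    ∃ (m' n' : ℕ) (a : Fin m' → R) (b : Fin n' → R) (c : Rˣ),
      (∀ j, b j ∈ IsLocalRing.maximalIdeal R) ∧
      f = C (c : R) * (∏ i, (X - C (a i))) * (∏ j, (1 - C (b j) * X)) := by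
  induction n with
  | zero =>
    intro f hdeg hf _
    have hN : f.natDegree = 0 := Nat.le_zero.mp hdeg
    have hfC : f = C (f.coeff 0) := Polynomial.eq_C_of_natDegree_eq_zero hN
    have hunit : IsUnit (f.coeff 0) := by
      by_contra hnu
      apply hf
      have h0 : (IsLocalRing.residue R) (f.coeff 0) = 0 :=
        Ideal.Quotient.eq_zero_iff_mem.mpr ((IsLocalRing.mem_maximalIdeal _).mpr hnu)
      rw [hfC, Polynomial.map_C, h0, Polynomial.C_0]
    refine ⟨0, 0, Fin.elim0, Fin.elim0, hunit.unit, fun j => j.elim0, ?_⟩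
    simp [hunit.unit_spec, ← hfC]
  | succ n ih =>
    intro f hdeg hf hsplit
    set K := FractionRing R
    set φ := algebraMap R K with hφ
    have hinj : Function.Injective φ := IsFractionRing.injective R K
    have hf0 : f ≠ 0 := by rintro rfl; simp at hf
    have hP0 : f.map φ ≠ 0 := (Polynomial.map_ne_zero_iff hinj).mpr hf0
    have hsplitsid : (f.map φ).Splits := hsplit
    have hlc : (f.map φ).leadingCoeff = φ f.leadingCoeff := Polynomial.leadingCoeff_map_of_injective hinj f
    set s := (f.map φ).roots with hsdef
    have hs : f.map φ = C (φ f.leadingCoeff) * (s.map fun α => X - C α).prod := by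
      rw [← hlc]
      exact hsplitsid.eq_prod_roots
    by_cases hu : IsUnit f.leadingCoeff
    · -- leading coefficient is a unit: all roots are in R
      have hroots : ∀ α ∈ s, ∃ a : R, φ a = α := by
        intro α hα
        have hαroot : (f.map φ).eval α = 0 :=
          (Polynomial.mem_roots hP0).mp hα
        have hint : IsIntegral R α := by
          refine ⟨f * C ((hu.unit⁻¹ : Rˣ) : R), ?_, ?_⟩
          · rw [Polynomial.Monic, Polynomial.leadingCoeff_mul, Polynomial.leadingCoeff_C]
            exact hu.mul_val_inv
          · rw [Polynomial.eval₂_mul, Polynomial.eval₂_C, ← Polynomial.eval_map,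
              hαroot, zero_mul]
        exact IsIntegrallyClosed.isIntegral_iff.mp hint
      obtain ⟨sR, hsR⟩ := multiset_lift φ s hroots
      have key : f = C f.leadingCoeff * (sR.map fun r => X - C r).prod := by
        apply Polynomial.map_injective φ hinj
        rw [hs, Polynomial.map_mul, Polynomial.map_C]
        congr 1
        rw [← hsR, Multiset.map_map]
        have h8 : Polynomial.map φ (sR.map fun r => (X : R[X]) - C r).prod
            = ((sR.map fun r => (X : R[X]) - C r).map (Polynomial.mapRingHom φ)).prod := by
          rw [← map_multiset_prod]
          rfl
        rw [h8, Multiset.map_map]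
        refine congrArg Multiset.prod (Multiset.map_congr rfl fun r _ => ?_)
        simp
      obtain ⟨m', a, ha⟩ := multiset_map_prod_fin sR (fun r => (X : R[X]) - C r)
      refine ⟨m', 0, a, Fin.elim0, hu.unit, fun j => j.elim0, ?_⟩
      conv_lhs => rw [key]
      rw [hu.unit_spec, ha]
      simp
    · -- leading coefficient is not a unit
      obtain ⟨j, hjres⟩ : ∃ j, (IsLocalRing.residue R) (f.coeff j) ≠ 0 := by
        by_contra hall
        push_neg at hall
        apply hf
        ext i
        simp [Polynomial.coeff_map, hall i]
      have hjle : j ≤ f.natDegree :=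
        Polynomial.le_natDegree_of_ne_zero (fun h => hjres (by rw [h, map_zero]))
      have hjunit : IsUnit (f.coeff j) := by
        by_contra hnu
        exact hjres (Ideal.Quotient.eq_zero_iff_mem.mpr ((IsLocalRing.mem_maximalIdeal _).mpr hnu))
      have hjn : j ≠ f.natDegree := fun h => hu (by rwa [h, Polynomial.coeff_natDegree] at hjunit)
      set N := f.natDegree with hNdef
      have hN1 : 1 ≤ N := by omega
      have hNmap : (f.map φ).natDegree = N := Polynomial.natDegree_map_eq_of_injective hinj f
      have hcard : Multiset.card (f.map φ).roots = (f.map φ).natDegree :=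
        (splits_iff_card_roots).mp hsplitsid
      have hvieta := Polynomial.coeff_eq_esymm_roots_of_card hcard
        (k := j) (by rw [hNmap]; exact hjle)
      rw [hNmap, Polynomial.coeff_map, hlc, ← hsdef] at hvieta
      -- lift the Kronecker products to R
      have hPlift : ∀ x ∈ (s.powersetCard (N - j)).map (fun t => φ f.leadingCoeff * t.prod),
          ∃ r : R, φ r = x := by
        intro x hx
        obtain ⟨t, ht, rfl⟩ := Multiset.mem_map.mp hx
        exact kronecker f (Multiset.mem_powersetCard.mp ht).1 hs
      obtain ⟨T, hT⟩ := multiset_lift φ _ hPlift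
      have hTsum : φ T.sum = φ f.leadingCoeff * Multiset.esymm s (N - j) := by
        rw [map_multiset_sum φ T, hT]
        simp only [Multiset.esymm]
        rw [← Multiset.sum_map_mul_left]
      have hcoeffj : f.coeff j = (-1 : R) ^ (N - j) * T.sum := by
        apply hinj
        rw [map_mul, map_pow, map_neg, map_one, hTsum, hvieta]
        ring
      have hTunit : IsUnit T.sum := by
        rw [hcoeffj] at hjunit
        exact (IsUnit.mul_iff.mp hjunit).2
      obtain ⟨r, hrT, hr⟩ := exists_unit_of_sum T hTunit
      have hrP : φ r ∈ (s.powersetCard (N - j)).map (fun t => φ f.leadingCoeff * t.prod) := by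
        rw [← hT]
        exact Multiset.mem_map_of_mem φ hrT
      obtain ⟨t, htmem, hteq⟩ := Multiset.mem_map.mp hrP
      have htle : t ≤ s := (Multiset.mem_powersetCard.mp htmem).1
      have htcard : Multiset.card t = N - j := (Multiset.mem_powersetCard.mp htmem).2
      have htne : t ≠ 0 := by
        intro h0
        rw [h0] at htcard
        simp at htcard
        omega
      obtain ⟨α, hαt⟩ := Multiset.exists_mem_of_ne_zero htne
      obtain ⟨t', rfl⟩ := Multiset.exists_cons_of_mem hαt
      have ht'le : t' ≤ s := le_trans (Multiset.le_cons_self t' α) htle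
      obtain ⟨r', hr'⟩ := kronecker f ht'le hs
      have hαφ : α * φ r' = φ r := by
        rw [hr', ← hteq, Multiset.prod_cons]
        ring
      have hα0 : α ≠ 0 := by
        intro h0
        rw [h0, zero_mul] at hαφ
        have hr0 : r = 0 := hinj (by rw [map_zero]; exact hαφ.symm)
        rw [hr0] at hr
        exact not_isUnit_zero hr
      set b0 : R := r' * ((hr.unit⁻¹ : Rˣ) : R) with hb0
      have hru : r * ((hr.unit⁻¹ : Rˣ) : R) = 1 := hr.mul_val_inv
      have hb1 : φ b0 * α = 1 := by
        have h6 : φ b0 * α = (α * φ r') * φ ((hr.unit⁻¹ : Rˣ) : R) := by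
          rw [hb0, map_mul]
          ring
        rw [h6, hαφ, ← map_mul, hru, map_one]
      have hφb0 : φ b0 ≠ 0 := fun h0 => by
        rw [h0, zero_mul] at hb1
        exact zero_ne_one hb1
      have hb0ne : b0 ≠ 0 := fun h0 => hφb0 (by rw [h0, map_zero])
      have hαs : α ∈ s := Multiset.mem_of_le htle (Multiset.mem_cons_self α t')
      have hαroot : (f.map φ).eval α = 0 := (Polynomial.mem_roots'.mp hαs).2
      by_cases hbu : IsUnit b0
      · -- α is the image of an element of R : peel off a factor (X - C a0)
        set a0 : R := ((hbu.unit⁻¹ : Rˣ) : R) with ha0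
        have hba : b0 * a0 = 1 := hbu.mul_val_inv
        have hφa : φ a0 = α := by
          have h2 : φ b0 * φ a0 = 1 := by rw [← map_mul, hba, map_one]
          exact mul_left_cancel₀ hφb0 (h2.trans hb1.symm)
        have heval : f.eval a0 = 0 := by
          apply hinj
          rw [map_zero, ← Polynomial.eval₂_at_apply, ← Polynomial.eval_map, hφa]
          exact hαroot
        obtain ⟨g, hfg⟩ := Polynomial.dvd_iff_isRoot.mpr heval
        have hg0 : g ≠ 0 := fun h0 => hf0 (by rw [hfg, h0, mul_zero])
        have hdegg : g.natDegree ≤ n := by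
          have h7 : f.natDegree = 1 + g.natDegree := by
            rw [hfg, Polynomial.natDegree_mul (Polynomial.X_sub_C_ne_zero a0) hg0,
              Polynomial.natDegree_X_sub_C]
          omega
        have hgres : g.map (IsLocalRing.residue R) ≠ 0 := fun h0 => hf (by
          rw [hfg, Polynomial.map_mul, h0, mul_zero])
        have hgsplit : (g.map φ).Splits := by
          exact hsplitsid.of_dvd hP0
            (Polynomial.map_dvd φ (Dvd.intro_left _ hfg.symm))
        obtain ⟨m', n', a, bs, c, hbmem, hgfact⟩ := ih g hdegg hgres hgsplit
        refine ⟨m' + 1, n', Fin.cons a0 a, bs, c, hbmem, ?_⟩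
        conv_lhs => rw [hfg, hgfact]
        simp only [Fin.prod_univ_succ, Fin.cons_zero, Fin.cons_succ]
        ring
      · -- b0 lies in the maximal ideal : peel off a factor (1 - C b0 * X)
        have hbm : b0 ∈ IsLocalRing.maximalIdeal R :=
          (IsLocalRing.mem_maximalIdeal _).mpr hbu
        have heval₂ : Polynomial.eval₂ φ α f = 0 := by
          rw [← Polynomial.eval_map]
          exact hαroot
        have : Invertible α := invertibleOfNonzero hα0
        have hrevroot : Polynomial.eval₂ φ (⅟α) f.reverse = 0 :=
          (Polynomial.eval₂_reverse_eq_zero_iff φ α f).mpr heval₂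
        rw [invOf_eq_right_inv (by rw [mul_comm]; exact hb1)] at hrevroot
        have hevb : f.reverse.eval b0 = 0 := by
          apply hinj
          rw [map_zero, ← Polynomial.eval₂_at_apply]
          exact hrevroot
        obtain ⟨h, hh⟩ := Polynomial.dvd_iff_isRoot.mpr hevb
        have hrev0 : f.reverse ≠ 0 := fun h0 => hf0 (Polynomial.reverse_eq_zero.mp h0)
        have hh0 : h ≠ 0 := fun h0 => hrev0 (by rw [hh, h0, mul_zero])
        obtain ⟨N1, hNN⟩ : ∃ N1, N = 1 + N1 := ⟨N - 1, by omega⟩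
        have hdegh : h.natDegree ≤ N1 := by
          have h1 : f.reverse.natDegree = 1 + h.natDegree := by
            rw [hh, Polynomial.natDegree_mul (Polynomial.X_sub_C_ne_zero b0) hh0,
              Polynomial.natDegree_X_sub_C]
          have h2 : f.reverse.natDegree ≤ N := Polynomial.reverse_natDegree_le f
          omega
        set g : R[X] := h.reflect N1 with hgdef
        have hfact : f = (1 - C b0 * X) * g := by
          have h3 : f = (f.reverse).reflect N := (reflect_reflect N f).symm
          rw [h3, hh, hNN, Polynomial.reflect_mul (X - C b0) h
            (Polynomial.natDegree_X_sub_C_le b0) hdegh, reflect_one_linear]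
        have hg0 : g ≠ 0 := fun h0 => hh0 (Polynomial.reflect_eq_zero_iff.mp h0)
        have hlindeg : (1 - C b0 * X : R[X]).natDegree = 1 := by
          have h4 : (1 - C b0 * X : R[X]) = C (-b0) * X + C 1 := by
            rw [map_neg, map_one]
            ring
          rw [h4, Polynomial.natDegree_linear (neg_ne_zero.mpr hb0ne)]
        have hlin0 : (1 - C b0 * X : R[X]) ≠ 0 := fun h0 => by
          rw [h0] at hlindeg
          simp at hlindeg
        have hdegg : g.natDegree ≤ n := by
          have h5 : f.natDegree = 1 + g.natDegree := by
            rw [hfact, Polynomial.natDegree_mul hlin0 hg0, hlindeg]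
          omega
        have hgres : g.map (IsLocalRing.residue R) ≠ 0 := fun h0 => hf (by
          rw [hfact, Polynomial.map_mul, h0, mul_zero])
        have hgsplit : (g.map φ).Splits := by
          exact hsplitsid.of_dvd hP0
            (Polynomial.map_dvd φ (Dvd.intro_left _ hfact.symm))
        obtain ⟨m', n', a, bs, c, hbmem, hgfact⟩ := ih g hdegg hgres hgsplit
        refine ⟨m', n' + 1, a, Fin.cons b0 bs, c, fun j => Fin.cases hbm hbmem j, ?_⟩
        conv_lhs => rw [hfact, hgfact]
        simp only [Fin.prod_univ_succ, Fin.cons_zero, Fin.cons_succ]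
        ring

end Main

end Statement0Aux

/-- Let `R` be a local integral domain (maximal ideal `m_R`, residue field
`k = R/m_R`) that is integrally closed in its field of fractions `K`.  Let `f ∈ R[z]` be a
polynomial whose image in `k[z]` is nonzero and which splits into a product of degree-one
polynomials over `K`.  Then `f = c · ∏ᵢ (z − aᵢ) · ∏ⱼ (1 − bⱼ·z)` for some `aᵢ ∈ R`,
`bⱼ ∈ m_R` and a unit `c ∈ R^×`. -/
theorem statement0 (R : Type*) [CommRing R] [IsDomain R] [IsLocalRing R]
    [IsIntegrallyClosed R] (f : R[X])
    (hf : f.map (IsLocalRing.residue R) ≠ 0)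
    (hsplit : (f.map (algebraMap R (FractionRing R))).Splits) :
    ∃ (m n : ℕ) (a : Fin m → R) (b : Fin n → R) (c : Rˣ),
      (∀ j, b j ∈ IsLocalRing.maximalIdeal R) ∧
      f = C (c : R) * (∏ i, (X - C (a i))) * (∏ j, (1 - C (b j) * X)) := by
  exact Statement0Aux.main f.natDegree f le_rfl hf hsplit
end

section
/- Let T be a nonempty set of O_E-lattices in E^n that is stable under scaling, i.e. if L ∈ T and a ∈ E^× then a·L ∈ T. Then the following three conditions are equivalent: (i) for every pair (x, y) of nonzero elements of E^n, either μ_L(x) ≥ μ_L(y) for every L ∈ T, or μ_L(x) ≤ μ_L(y) for every L ∈ T; (ii) for all L, L' ∈ T, either L ⊆ L' or L' ⊆ L; (iii) there exist an integer r ≥ 0 and O_E-lattices L^0 ⊋ L^1 ⊋ … ⊋ L^r ⊋ m_E·L^0 in E^n such that T = {a·L^i : a ∈ E^×, 0 ≤ i ≤ r}. -/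
noncomputable section

open scoped Pointwise

/-- The data of a complete discrete valuation field `E` with finite residue field of
cardinality `q`, packaged via its standard absolute value `v : E → ℝ` (so `v π = q⁻¹` for a
uniformizer `π`, `v 0 = 0`). -/
structure NonarchCDVF (E : Type*) [Field E] (q : ℕ) : Type _ where
  /-- the standard absolute value -/
  v : E → ℝ
  v_zero : v 0 = 0
  v_pos : ∀ x : E, x ≠ 0 → 0 < v x
  v_mul : ∀ x y : E, v (x * y) = v x * v y
  v_add : ∀ x y : E, v (x + y) ≤ max (v x) (v y)
  one_lt_q : 1 < q
  /-- the valuation is discrete with value group `q^ℤ` -/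
  discrete : ∀ x : E, x ≠ 0 → ∃ m : ℤ, v x = (q : ℝ) ^ m
  exists_uniformizer : ∃ π : E, v π = (q : ℝ) ^ (-1 : ℤ)
  /-- the residue field `O_E/m_E` is finite of cardinality `q` -/
  residue_card : ∃ S : Finset E, S.card = q ∧
    ∀ x : E, v x ≤ 1 → ∃! s, s ∈ S ∧ v (x - s) < 1
  /-- `E` is complete: every Cauchy sequence converges -/
  complete : ∀ f : ℕ → E,
    (∀ ε : ℝ, 0 < ε → ∃ N : ℕ, ∀ m ≥ N, ∀ k ≥ N, v (f m - f k) < ε) →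
    ∃ l : E, ∀ ε : ℝ, 0 < ε → ∃ N : ℕ, ∀ m ≥ N, v (f m - l) < ε

namespace NonarchCDVF

variable {E : Type*} [Field E] {q : ℕ}

/-- The `O_E`-submodule of `E^n` generated by a finite set `B`
(`O_E = {a : E | v a ≤ 1}` is the valuation ring). -/
def latticeOf (D : NonarchCDVF E q) {n : ℕ} (B : Finset (Fin n → E)) :
    Set (Fin n → E) :=
  {x | ∃ c : (Fin n → E) → E, (∀ b, D.v (c b) ≤ 1) ∧ x = ∑ b ∈ B, c b • b}

/-- An `O_E`-lattice in `E^n`: a finitely generated `O_E`-submodule of `E^n`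
which spans `E^n` over `E`. -/
def IsLattice (D : NonarchCDVF E q) {n : ℕ} (L : Set (Fin n → E)) : Prop :=
  ∃ B : Finset (Fin n → E),
    L = D.latticeOf B ∧ Submodule.span E (B : Set (Fin n → E)) = ⊤

/-- The norm associated to a lattice `L`: `μ_L(x) = min {v a : a ∈ E, x ∈ a • L}`. -/
def latticeNorm (D : NonarchCDVF E q) {n : ℕ} (L : Set (Fin n → E))
    (x : Fin n → E) : ℝ :=
  sInf {r : ℝ | ∃ a : E, D.v a = r ∧ ∃ y ∈ L, x = a • y}

/-- A norm on `E^n`. -/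
def IsNorm (D : NonarchCDVF E q) {n : ℕ} (μ : (Fin n → E) → ℝ) : Prop :=
  (∀ (a : E) (x : Fin n → E), μ (a • x) = D.v a * μ x) ∧
  (∀ x y : Fin n → E, μ (x + y) ≤ max (μ x) (μ y)) ∧
  (∀ x : Fin n → E, x ≠ 0 → 0 < μ x)

/-- The image `m_E • L` of a set `L ⊆ E^n` under the maximal ideal
`m_E = {a : E | v a < 1}`. -/
def maxIdealSmul (D : NonarchCDVF E q) {n : ℕ} (L : Set (Fin n → E)) :
    Set (Fin n → E) :=
  {z | ∃ a : E, D.v a < 1 ∧ ∃ y ∈ L, z = a • y}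

end NonarchCDVF

namespace NonarchCDVF

variable {E : Type*} [Field E] {q : ℕ} (D : NonarchCDVF E q)

lemma one_lt_qR (D : NonarchCDVF E q) : (1:ℝ) < (q:ℝ) := by exact_mod_cast D.one_lt_q
lemma qR_pos (D : NonarchCDVF E q) : (0:ℝ) < (q:ℝ) := lt_trans one_pos D.one_lt_qR

lemma v_one : D.v 1 = 1 := by
  have h := D.v_mul 1 1
  rw [mul_one] at h
  have h1 : 0 < D.v 1 := D.v_pos 1 one_ne_zero
  nlinarith

lemma v_nonneg (x : E) : 0 ≤ D.v x := by
  rcases eq_or_ne x 0 with rfl | h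
  · rw [D.v_zero]
  · exact (D.v_pos x h).le

lemma v_neg (x : E) : D.v (-x) = D.v x := by
  have h0 : D.v (-1 : E) = 1 := by
    have h := D.v_mul (-1) (-1)
    rw [neg_mul_neg, one_mul, D.v_one] at h
    have h1 : 0 ≤ D.v (-1 : E) := D.v_nonneg _
    nlinarith
  calc D.v (-x) = D.v ((-1) * x) := by ring_nf
    _ = D.v (-1) * D.v x := D.v_mul _ _
    _ = D.v x := by rw [h0, one_mul]

lemma v_inv {x : E} (hx : x ≠ 0) : D.v x⁻¹ = (D.v x)⁻¹ := by
  exact eq_inv_of_mul_eq_one_left (by rw [← D.v_mul, inv_mul_cancel₀ hx, D.v_one])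

lemma v_pow (x : E) (k : ℕ) : D.v (x ^ k) = (D.v x) ^ k := by
  induction k with
  | zero => simp [D.v_one]
  | succ k ih => rw [pow_succ, D.v_mul, ih, pow_succ]

lemma v_zpow {x : E} (hx : x ≠ 0) (k : ℤ) : D.v (x ^ k) = (D.v x) ^ k := by
  rcases k with k | k
  · simpa using D.v_pow x k
  · rw [zpow_negSucc, zpow_negSucc, D.v_inv (pow_ne_zero _ hx), D.v_pow]

end NonarchCDVF
namespace NonarchCDVF

variable {E : Type*} [Field E] {q : ℕ} (D : NonarchCDVF E q)

lemma exists_unif : ∃ π : E, π ≠ 0 ∧ D.v π = (q:ℝ)⁻¹ := by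
  obtain ⟨π, hπ⟩ := D.exists_uniformizer
  have h1 : D.v π = (q:ℝ)⁻¹ := by rw [hπ]; simp
  refine ⟨π, fun h => ?_, h1⟩
  rw [h, D.v_zero] at h1
  have := D.qR_pos
  simp only [eq_comm, inv_eq_zero] at h1
  linarith [h1 ▸ this]

/-- an element of each valuation `q^m` -/
lemma exists_v_eq (m : ℤ) : ∃ a : E, a ≠ 0 ∧ D.v a = (q:ℝ) ^ m := by
  obtain ⟨π, hπ0, hπ⟩ := D.exists_unif
  refine ⟨π ^ (-m), zpow_ne_zero _ hπ0, ?_⟩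
  rw [D.v_zpow hπ0, hπ, inv_zpow', neg_neg]

/-- v of a finite sum is at most C if each term is -/
lemma v_sum_le {ι : Type*} (s : Finset ι) (f : ι → E) {C : ℝ} (hC : 0 ≤ C)
    (h : ∀ i ∈ s, D.v (f i) ≤ C) : D.v (∑ i ∈ s, f i) ≤ C := by
  classical
  induction s using Finset.induction with
  | empty => simpa [D.v_zero] using hC
  | @insert a s hx ih =>
    rw [Finset.sum_insert hx]
    refine le_trans (D.v_add _ _) (max_le (h a (by simp)) (ih fun i hi => h i (by simp [hi])))

/-- membership in a sum-closed set -/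
lemma setSum_mem {ι : Type*} (P : Set (Fin n → E)) (h0 : (0 : Fin n → E) ∈ P)
    (hadd : ∀ x ∈ P, ∀ y ∈ P, x + y ∈ P) (s : Finset ι) (f : ι → Fin n → E)
    (h : ∀ i ∈ s, f i ∈ P) : (∑ i ∈ s, f i) ∈ P := by
  classical
  induction s using Finset.induction with
  | empty => simpa using h0
  | @insert a s hx ih =>
    rw [Finset.sum_insert hx]
    exact hadd _ (h a (by simp)) _ (ih fun i hi => h i (by simp [hi]))

variable {n : ℕ}

lemma latticeOf_zero_mem (B : Finset (Fin n → E)) : (0 : Fin n → E) ∈ D.latticeOf B :=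
  ⟨0, fun b => by simp [D.v_zero], by simp⟩

lemma latticeOf_add_mem (B : Finset (Fin n → E)) {x y : Fin n → E}
    (hx : x ∈ D.latticeOf B) (hy : y ∈ D.latticeOf B) : x + y ∈ D.latticeOf B := by
  obtain ⟨c, hc, rfl⟩ := hx
  obtain ⟨d, hd, rfl⟩ := hy
  refine ⟨c + d, fun b => le_trans (D.v_add _ _) (max_le (hc b) (hd b)), ?_⟩
  rw [← Finset.sum_add_distrib]
  exact Finset.sum_congr rfl fun b _ => by simp [add_smul]

lemma latticeOf_smul_mem (B : Finset (Fin n → E)) {a : E} (ha : D.v a ≤ 1)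
    {x : Fin n → E} (hx : x ∈ D.latticeOf B) : a • x ∈ D.latticeOf B := by
  obtain ⟨c, hc, rfl⟩ := hx
  refine ⟨fun b => a * c b, fun b => by
    rw [D.v_mul]; exact mul_le_one₀ ha (D.v_nonneg _) (hc b), ?_⟩
  rw [Finset.smul_sum]
  exact Finset.sum_congr rfl fun b _ => by rw [mul_smul]

lemma lat_zero_mem {L : Set (Fin n → E)} (hL : D.IsLattice L) : (0 : Fin n → E) ∈ L := by
  obtain ⟨B, rfl, -⟩ := hL; exact D.latticeOf_zero_mem B

lemma lat_add_mem {L : Set (Fin n → E)} (hL : D.IsLattice L) {x y : Fin n → E}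
    (hx : x ∈ L) (hy : y ∈ L) : x + y ∈ L := by
  obtain ⟨B, rfl, -⟩ := hL; exact D.latticeOf_add_mem B hx hy

lemma lat_smul_mem {L : Set (Fin n → E)} (hL : D.IsLattice L) {a : E} (ha : D.v a ≤ 1)
    {x : Fin n → E} (hx : x ∈ L) : a • x ∈ L := by
  obtain ⟨B, rfl, -⟩ := hL; exact D.latticeOf_smul_mem B ha hx

lemma lat_neg_mem {L : Set (Fin n → E)} (hL : D.IsLattice L) {x : Fin n → E}
    (hx : x ∈ L) : -x ∈ L := by
  have := D.lat_smul_mem hL (a := -1) (by rw [show (-1 : E) = -(1:E) by ring, D.v_neg, D.v_one]) hx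
  simpa using this

lemma lat_sub_mem {L : Set (Fin n → E)} (hL : D.IsLattice L) {x y : Fin n → E}
    (hx : x ∈ L) (hy : y ∈ L) : x - y ∈ L := by
  rw [sub_eq_add_neg]; exact D.lat_add_mem hL hx (D.lat_neg_mem hL hy)

/-- generators belong to the lattice -/
lemma mem_latticeOf_self (B : Finset (Fin n → E)) {b : Fin n → E} (hb : b ∈ B) :
    b ∈ D.latticeOf B := by
  classical
  refine ⟨fun z => if z = b then 1 else 0, fun z => ?_, ?_⟩
  · by_cases h : z = b <;> simp [h, D.v_one, D.v_zero]
  · symm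
    simp only [ite_smul, one_smul, zero_smul]
    rw [Finset.sum_ite_eq' B b (fun z => z)]
    simp [hb]

end NonarchCDVF
namespace NonarchCDVF

variable {E : Type*} [Field E] {q : ℕ} (D : NonarchCDVF E q) {n : ℕ}

/-- every lattice is bounded coordinatewise -/
lemma lat_bounded {L : Set (Fin n → E)} (hL : D.IsLattice L) :
    ∃ C : ℝ, 0 < C ∧ ∀ x ∈ L, ∀ j, D.v (x j) ≤ C := by
  obtain ⟨B, rfl, -⟩ := hL
  have hs0 : 0 ≤ ∑ b ∈ B, ∑ j, D.v (b j) :=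
    Finset.sum_nonneg fun b _ => Finset.sum_nonneg fun j _ => D.v_nonneg _
  refine ⟨1 + ∑ b ∈ B, ∑ j, D.v (b j), by linarith, ?_⟩
  rintro x ⟨c, hc, rfl⟩ j
  have hbound : ∀ b ∈ B, D.v (b j) ≤ 1 + ∑ b ∈ B, ∑ j, D.v (b j) := by
    intro b hb
    have h1 : D.v (b j) ≤ ∑ j, D.v (b j) :=
      Finset.single_le_sum (fun i _ => D.v_nonneg _) (Finset.mem_univ j)
    have h2 : (∑ j, D.v (b j)) ≤ ∑ b ∈ B, ∑ j, D.v (b j) :=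
      Finset.single_le_sum (f := fun b => ∑ j, D.v (b j))
        (fun b _ => Finset.sum_nonneg fun i _ => D.v_nonneg _) hb
    linarith
  have : (∑ b ∈ B, c b • b) j = ∑ b ∈ B, c b * b j := by
    simp [Finset.sum_apply]
  rw [this]
  refine D.v_sum_le B _ (by linarith) fun b hb => ?_
  rw [D.v_mul]
  calc D.v (c b) * D.v (b j) ≤ 1 * (1 + ∑ b ∈ B, ∑ j, D.v (b j)) := by
        apply mul_le_mul (hc b) (hbound b hb) (D.v_nonneg _) zero_le_one
    _ = _ := one_mul _

/-- every vector is in some scaling of a lattice -/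
lemma lat_absorbs {L : Set (Fin n → E)} (hL : D.IsLattice L) (x : Fin n → E) :
    ∃ a : E, a ≠ 0 ∧ ∃ y ∈ L, x = a • y := by
  classical
  obtain ⟨B, rfl, hspan⟩ := hL
  have hx : x ∈ Submodule.span E (B : Set (Fin n → E)) := by rw [hspan]; trivial
  obtain ⟨f, -, hf⟩ := Submodule.mem_span_finset.mp hx
  -- choose a with big valuation
  set C : ℝ := 1 + ∑ b ∈ B, D.v (f b) with hC
  have hC1 : 1 ≤ C := by
    have : 0 ≤ ∑ b ∈ B, D.v (f b) := Finset.sum_nonneg fun b _ => D.v_nonneg _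
    simp [hC]; linarith
  have hfb : ∀ b ∈ B, D.v (f b) ≤ C := by
    intro b hb
    have := Finset.single_le_sum (f := fun b => D.v (f b)) (fun b _ => D.v_nonneg _) hb
    simp [hC]; linarith
  obtain ⟨N, hN⟩ := pow_unbounded_of_one_lt C D.one_lt_qR
  obtain ⟨a, ha0, hav⟩ := D.exists_v_eq (N : ℤ)
  refine ⟨a, ha0, a⁻¹ • x, ?_, by rw [smul_inv_smul₀ ha0]⟩
  refine ⟨fun b => if b ∈ B then a⁻¹ * f b else 0, fun b => ?_, ?_⟩
  · by_cases hb : b ∈ B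
    · simp only [hb, if_true]
      rw [D.v_mul, D.v_inv ha0, hav]
      rw [inv_mul_le_iff₀ (zpow_pos D.qR_pos _)]
      have : C ≤ (q:ℝ) ^ (N:ℤ) := by
        rw [zpow_natCast]; exact hN.le
      calc D.v (f b) ≤ C := hfb b hb
        _ ≤ (q:ℝ)^(N:ℤ) := this
        _ = (q:ℝ)^(N:ℤ) * 1 := (mul_one _).symm
    · simp [hb, D.v_zero]
  · rw [← hf, Finset.smul_sum]
    refine Finset.sum_congr rfl fun b hb => ?_
    simp [hb, mul_smul]

/-- the defining set of the lattice norm -/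
def normSet (L : Set (Fin n → E)) (x : Fin n → E) : Set ℝ :=
  {r : ℝ | ∃ a : E, D.v a = r ∧ ∃ y ∈ L, x = a • y}

lemma latticeNorm_eq_sInf (L : Set (Fin n → E)) (x : Fin n → E) :
    D.latticeNorm L x = sInf (D.normSet L x) := rfl

lemma normSet_nonneg (L : Set (Fin n → E)) (x : Fin n → E) :
    ∀ r ∈ D.normSet L x, 0 ≤ r := by
  rintro r ⟨a, rfl, -⟩; exact D.v_nonneg a

lemma normSet_bddBelow (L : Set (Fin n → E)) (x : Fin n → E) :
    BddBelow (D.normSet L x) := ⟨0, fun r hr => D.normSet_nonneg L x r hr⟩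

lemma normSet_nonempty {L : Set (Fin n → E)} (hL : D.IsLattice L) (x : Fin n → E) :
    (D.normSet L x).Nonempty := by
  obtain ⟨a, ha0, y, hy, hxy⟩ := D.lat_absorbs hL x
  exact ⟨D.v a, a, rfl, y, hy, hxy⟩

lemma normSet_pow {L : Set (Fin n → E)} {x : Fin n → E} (hx : x ≠ 0) :
    ∀ r ∈ D.normSet L x, ∃ m : ℤ, r = (q:ℝ) ^ m := by
  rintro r ⟨a, rfl, y, hy, rfl⟩
  have ha : a ≠ 0 := by rintro rfl; simp at hx
  obtain ⟨m, hm⟩ := D.discrete a ha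
  exact ⟨m, hm⟩

lemma normSet_lb {L : Set (Fin n → E)} (hL : D.IsLattice L) {x : Fin n → E} (hx : x ≠ 0) :
    ∃ ε : ℝ, 0 < ε ∧ ∀ r ∈ D.normSet L x, ε ≤ r := by
  obtain ⟨C, hC, hbd⟩ := D.lat_bounded hL
  obtain ⟨j, hj⟩ : ∃ j, x j ≠ 0 := by
    by_contra h; push_neg at h; exact hx (funext h)
  refine ⟨D.v (x j) / C, div_pos (D.v_pos _ hj) hC, ?_⟩
  rintro r ⟨a, rfl, y, hy, rfl⟩
  have : D.v ((a • y) j) = D.v a * D.v (y j) := by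
    simp only [Pi.smul_apply, smul_eq_mul, D.v_mul]
  rw [div_le_iff₀ hC, this]
  exact mul_le_mul_of_nonneg_left (hbd y hy j) (D.v_nonneg a)

/-- inf of a nonempty set of powers of q bounded below by a positive number is attained -/
lemma sInf_mem_of_powers (D : NonarchCDVF E q) {S : Set ℝ} (hne : S.Nonempty)
    (hpow : ∀ r ∈ S, ∃ m : ℤ, r = (q:ℝ) ^ m) {ε : ℝ} (hε : 0 < ε)
    (hlb : ∀ r ∈ S, ε ≤ r) : sInf S ∈ S ∧ ∃ m : ℤ, sInf S = (q:ℝ) ^ m := by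
  have hq := D.one_lt_qR
  -- find m0 with q^m0 < ε
  obtain ⟨N, hN⟩ := pow_unbounded_of_one_lt ε⁻¹ hq
  have hm0 : (q:ℝ) ^ (-(N:ℤ)) < ε := by
    rw [zpow_neg, zpow_natCast, inv_lt_comm₀ (by positivity) hε]
    exact hN
  set M : ℤ → Prop := fun m => (q:ℝ) ^ m ∈ S
  have hMne : ∃ m, M m := by
    obtain ⟨r, hr⟩ := hne
    obtain ⟨m, rfl⟩ := hpow r hr
    exact ⟨m, hr⟩
  have hMbdd : ∃ b : ℤ, ∀ m, M m → b ≤ m := by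
    refine ⟨-(N:ℤ), fun m hm => ?_⟩
    by_contra h
    push_neg at h
    have : (q:ℝ) ^ m < (q:ℝ) ^ (-(N:ℤ)) := zpow_lt_zpow_right₀ hq h
    linarith [hlb _ hm, hm0]
  obtain ⟨lb, hlbM, hleast⟩ := Int.exists_least_of_bdd hMbdd hMne
  have h1 : ∀ r ∈ S, (q:ℝ) ^ lb ≤ r := by
    intro r hr
    obtain ⟨m, rfl⟩ := hpow r hr
    exact zpow_le_zpow_right₀ hq.le (hleast m hr)
  have h2 : sInf S = (q:ℝ) ^ lb :=
    le_antisymm (csInf_le ⟨0, fun r hr => le_trans (by positivity) (h1 r hr)⟩ hlbM)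
      (le_csInf hne h1)
  exact ⟨h2 ▸ hlbM, lb, h2⟩

lemma latticeNorm_mem {L : Set (Fin n → E)} (hL : D.IsLattice L) {x : Fin n → E}
    (hx : x ≠ 0) : D.latticeNorm L x ∈ D.normSet L x ∧
      ∃ m : ℤ, D.latticeNorm L x = (q:ℝ) ^ m := by
  obtain ⟨ε, hε, hlb⟩ := D.normSet_lb hL hx
  exact D.sInf_mem_of_powers (D.normSet_nonempty hL x) (D.normSet_pow hx) hε hlb

lemma latticeNorm_pos {L : Set (Fin n → E)} (hL : D.IsLattice L) {x : Fin n → E}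
    (hx : x ≠ 0) : 0 < D.latticeNorm L x := by
  obtain ⟨m, hm⟩ := (D.latticeNorm_mem hL hx).2
  rw [hm]
  exact zpow_pos D.qR_pos m

lemma latticeNorm_le {L : Set (Fin n → E)} (x : Fin n → E) {a : E} {y : Fin n → E}
    (hy : y ∈ L) (hxy : x = a • y) : D.latticeNorm L x ≤ D.v a :=
  csInf_le (D.normSet_bddBelow L x) ⟨a, rfl, y, hy, hxy⟩

lemma latticeNorm_le_one {L : Set (Fin n → E)} {x : Fin n → E} (hx : x ∈ L) :
    D.latticeNorm L x ≤ 1 := by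
  have := D.latticeNorm_le (L := L) x hx (by rw [one_smul])
  rwa [D.v_one] at this

lemma mem_of_latticeNorm_le_one {L : Set (Fin n → E)} (hL : D.IsLattice L)
    {x : Fin n → E} (hx : x ≠ 0) (h : D.latticeNorm L x ≤ 1) : x ∈ L := by
  obtain ⟨⟨a, hav, y, hy, hxy⟩, -⟩ := D.latticeNorm_mem hL hx
  rw [hxy]
  exact D.lat_smul_mem hL (by rw [hav]; exact h) hy

lemma latticeNorm_mono {L L' : Set (Fin n → E)} (hL : D.IsLattice L)
    (h : L ⊆ L') (x : Fin n → E) : D.latticeNorm L' x ≤ D.latticeNorm L x := by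
  refine csInf_le_csInf (D.normSet_bddBelow L' x) (D.normSet_nonempty hL x) ?_
  rintro r ⟨a, rfl, y, hy, rfl⟩
  exact ⟨a, rfl, y, h hy, rfl⟩

end NonarchCDVF
namespace NonarchCDVF

variable {E : Type*} [Field E] {q : ℕ} (D : NonarchCDVF E q) {n : ℕ}

lemma v_le_qinv_of_lt_one {a : E} (ha : D.v a < 1) : D.v a ≤ (q:ℝ)⁻¹ := by
  rcases eq_or_ne a 0 with rfl | h
  · rw [D.v_zero]; positivity
  · obtain ⟨m, hm⟩ := D.discrete a h
    rw [hm] at ha ⊢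
    have hm0 : m < 0 := by
      by_contra hc
      push_neg at hc
      have : (1:ℝ) ≤ (q:ℝ)^m := one_le_zpow₀ D.one_lt_qR.le hc
      linarith
    calc (q:ℝ)^m ≤ (q:ℝ)^(-1:ℤ) := zpow_le_zpow_right₀ D.one_lt_qR.le (by omega)
      _ = (q:ℝ)⁻¹ := by simp

lemma smul_lat_subset {L : Set (Fin n → E)} (hL : D.IsLattice L) {a : E}
    (ha : D.v a ≤ 1) : a • L ⊆ L := by
  rintro x hx
  obtain ⟨y, hy, rfl⟩ := hx
  exact D.lat_smul_mem hL ha hy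

/-- scaling a lattice gives a lattice -/
lemma smul_isLattice {L : Set (Fin n → E)} (hL : D.IsLattice L) {a : E} (ha : a ≠ 0) :
    D.IsLattice (a • L) := by
  classical
  obtain ⟨B, rfl, hspan⟩ := hL
  refine ⟨B.image (fun b => a • b), ?_, ?_⟩
  · ext x
    constructor
    · rintro ⟨y, ⟨c, hc, rfl⟩, rfl⟩
      refine ⟨fun b' => c (a⁻¹ • b'), fun b' => hc _, ?_⟩
      rw [Finset.sum_image (by intro p _ r _ h; exact smul_right_injective _ ha h)]
      simp only [Finset.smul_sum, inv_smul_smul₀ ha]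
      exact Finset.sum_congr rfl fun b hb => (smul_comm _ _ _)
    · rintro ⟨c, hc, rfl⟩
      rw [Finset.sum_image (by intro p _ r _ h; exact smul_right_injective _ ha h)]
      refine ⟨∑ b ∈ B, c (a • b) • b, ⟨fun b => c (a • b), fun b => hc _, rfl⟩, ?_⟩
      simp only [Finset.smul_sum]
      exact Finset.sum_congr rfl fun b hb => (smul_comm _ _ _)
  · rw [Finset.coe_image]
    rw [show (fun b => a • b) '' (B : Set (Fin n → E)) = a • (B : Set (Fin n → E)) from rfl]
    rw [Submodule.span_smul_eq_of_isUnit _ _ (isUnit_iff_ne_zero.mpr ha), hspan]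

/-- norm of a scaled lattice -/
lemma latticeNorm_smul_lat {L : Set (Fin n → E)} {a : E} (ha : a ≠ 0) (x : Fin n → E) :
    D.latticeNorm (a • L) x = (D.v a)⁻¹ * D.latticeNorm L x := by
  have hset : D.normSet (a • L) x = (D.v a)⁻¹ • D.normSet L x := by
    ext r
    constructor
    · rintro ⟨b, rfl, z, ⟨y, hy, rfl⟩, rfl⟩
      refine ⟨D.v (b * a), ⟨b * a, rfl, y, hy, by rw [mul_smul]⟩, ?_⟩
      have hva : D.v a ≠ 0 := (D.v_pos a ha).ne'
      simp only [smul_eq_mul, D.v_mul]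
      field_simp
      try ring
    · rintro ⟨s, ⟨b, rfl, y, hy, rfl⟩, rfl⟩
      refine ⟨b * a⁻¹, by simp only [smul_eq_mul]; rw [D.v_mul, D.v_inv ha]; ring, a • y, ⟨y, hy, rfl⟩, ?_⟩
      rw [smul_smul, mul_assoc, inv_mul_cancel₀ ha, mul_one]
  rw [latticeNorm_eq_sInf, latticeNorm_eq_sInf, hset,
    Real.sInf_smul_of_nonneg (inv_nonneg.mpr (D.v_nonneg a)) _]
  rfl

/-- a lattice contains a nonzero vector (n ≥ 1) -/
lemma lat_exists_ne_zero (hn : 1 ≤ n) {L : Set (Fin n → E)} (hL : D.IsLattice L) :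
    ∃ x ∈ L, x ≠ 0 := by
  have h1 : (fun _ => (1:E) : Fin n → E) ≠ 0 := by
    intro h
    exact one_ne_zero (congrFun h ⟨0, hn⟩)
  obtain ⟨a, ha0, y, hy, hxy⟩ := D.lat_absorbs hL (fun _ => (1:E))
  refine ⟨y, hy, fun h => ?_⟩
  rw [h, smul_zero] at hxy
  exact h1 hxy

/-- strictness of scaling by small elements -/
lemma smul_lat_ssubset (hn : 1 ≤ n) {L : Set (Fin n → E)} (hL : D.IsLattice L) {a : E}
    (ha0 : a ≠ 0) (ha : D.v a < 1) : a • L ⊂ L := by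
  refine ⟨D.smul_lat_subset hL ha.le, fun hsub => ?_⟩
  obtain ⟨x, hx, hx0⟩ := D.lat_exists_ne_zero hn hL
  have h1 : D.latticeNorm (a • L) x = (D.v a)⁻¹ * D.latticeNorm L x :=
    D.latticeNorm_smul_lat ha0 x
  have h2 : a • L = L := le_antisymm (D.smul_lat_subset hL ha.le) hsub
  rw [h2] at h1
  have hpos := D.latticeNorm_pos hL hx0
  have hva := D.v_pos a ha0
  have h3 : (D.v a)⁻¹ * D.latticeNorm L x = 1 * D.latticeNorm L x := by
    rw [one_mul]; exact h1.symm
  have h4 := mul_right_cancel₀ hpos.ne' h3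
  rw [inv_eq_one] at h4
  linarith

end NonarchCDVF
namespace NonarchCDVF

variable {E : Type*} [Field E] {q : ℕ} (D : NonarchCDVF E q) {n : ℕ}

lemma maxIdealSmul_eq {L : Set (Fin n → E)} (hL : D.IsLattice L) {π : E}
    (hπ : D.v π = (q:ℝ)⁻¹) : D.maxIdealSmul L = π • L := by
  have hπ0 : π ≠ 0 := by
    intro h; rw [h, D.v_zero] at hπ
    have := D.qR_pos
    rw [eq_comm, inv_eq_zero] at hπ; linarith [hπ ▸ this]
  have hπlt : D.v π < 1 := by
    rw [hπ]; rw [inv_lt_one_iff₀]; right; exact D.one_lt_qR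
  ext z
  constructor
  · rintro ⟨a, ha, y, hy, rfl⟩
    have hle : D.v (a * π⁻¹) ≤ 1 := by
      rw [D.v_mul, D.v_inv hπ0, hπ, inv_inv]
      calc D.v a * (q:ℝ) ≤ (q:ℝ)⁻¹ * (q:ℝ) :=
            mul_le_mul_of_nonneg_right (D.v_le_qinv_of_lt_one ha) D.qR_pos.le
        _ = 1 := inv_mul_cancel₀ D.qR_pos.ne'
    refine ⟨(a * π⁻¹) • y, D.lat_smul_mem hL hle hy, ?_⟩
    show π • ((a * π⁻¹) • y) = a • y
    rw [smul_smul, mul_comm π, mul_assoc, inv_mul_cancel₀ hπ0, mul_one]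
  · rintro ⟨y, hy, rfl⟩
    exact ⟨π, hπlt, y, hy, rfl⟩

/-- eventually scaled into another lattice -/
lemma exists_scale_subset {L L0 : Set (Fin n → E)} (hL : D.IsLattice L)
    (hL0 : D.IsLattice L0) {π : E} (hπ0 : π ≠ 0) (hπ : D.v π = (q:ℝ)⁻¹) :
    ∃ N : ℕ, π ^ N • L ⊆ L0 := by
  classical
  obtain ⟨B, hB, -⟩ := hL
  -- choose for each b a scalar
  have habs : ∀ b : Fin n → E, ∃ a : E, a ≠ 0 ∧ ∃ y ∈ L0, b = a • y :=
    fun b => D.lat_absorbs hL0 b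
  choose g hg0 hgy using habs
  set C : ℝ := 1 + ∑ b ∈ B, D.v (g b) with hC
  have hC1 : 1 ≤ C := by
    have : 0 ≤ ∑ b ∈ B, D.v (g b) := Finset.sum_nonneg fun b _ => D.v_nonneg _
    simp [hC]; linarith
  have hgb : ∀ b ∈ B, D.v (g b) ≤ C := by
    intro b hb
    have := Finset.single_le_sum (f := fun b => D.v (g b)) (fun b _ => D.v_nonneg _) hb
    simp [hC]; linarith
  obtain ⟨N, hN⟩ := pow_unbounded_of_one_lt C D.one_lt_qR
  refine ⟨N, ?_⟩
  rintro z ⟨x, hx, rfl⟩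
  rw [hB] at hx
  obtain ⟨c, hc, rfl⟩ := hx
  show π ^ N • (∑ b ∈ B, c b • b) ∈ L0
  rw [Finset.smul_sum]
  refine setSum_mem L0 (D.lat_zero_mem hL0) (fun x hx y hy => D.lat_add_mem hL0 hx hy)
    B _ fun b hb => ?_
  obtain ⟨y, hy, hby⟩ := hgy b
  have : π ^ N • c b • b = (π ^ N * c b * g b) • y := by
    nth_rewrite 2 [hby]
    rw [smul_smul, smul_smul, mul_assoc]
  rw [this]
  refine D.lat_smul_mem hL0 ?_ hy
  rw [D.v_mul, D.v_mul, D.v_pow, hπ]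
  have hq := D.qR_pos
  have h1 : ((q:ℝ)⁻¹) ^ N * D.v (c b) ≤ ((q:ℝ)⁻¹) ^ N := by
    nlinarith [hc b, D.v_nonneg (c b), pow_pos (inv_pos.mpr hq) N]
  have h2 : ((q:ℝ)⁻¹) ^ N * D.v (g b) ≤ ((q:ℝ)⁻¹) ^ N * C :=
    mul_le_mul_of_nonneg_left (hgb b hb) (by positivity)
  have h3 : ((q:ℝ)⁻¹) ^ N * C ≤ 1 := by
    rw [inv_pow, inv_mul_le_one₀ (by positivity)]
    exact hN.le
  calc ((q:ℝ)⁻¹) ^ N * D.v (c b) * D.v (g b)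
      ≤ ((q:ℝ)⁻¹) ^ N * D.v (g b) := by
        nlinarith [D.v_nonneg (g b), pow_pos (inv_pos.mpr hq) N, hc b, D.v_nonneg (c b)]
    _ ≤ 1 := le_trans h2 h3

/-- no scaled lattice with very negative exponent is contained in `L0` -/
lemma exists_scale_not_subset (hn : 1 ≤ n) {L L0 : Set (Fin n → E)} (hL : D.IsLattice L)
    (hL0 : D.IsLattice L0) {π : E} (hπ0 : π ≠ 0) (hπ : D.v π = (q:ℝ)⁻¹) :
    ∃ N : ℕ, ¬ ((π ^ (-(N:ℤ))) • L ⊆ L0) := by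
  obtain ⟨C, hC, hbd⟩ := D.lat_bounded hL0
  obtain ⟨x, hx, hx0⟩ := D.lat_exists_ne_zero hn hL
  obtain ⟨j, hj⟩ : ∃ j, x j ≠ 0 := by
    by_contra h; push_neg at h; exact hx0 (funext h)
  have hvj := D.v_pos _ hj
  obtain ⟨N, hN⟩ := pow_unbounded_of_one_lt (C / D.v (x j)) D.one_lt_qR
  refine ⟨N, fun hsub => ?_⟩
  have hmem : π ^ (-(N:ℤ)) • x ∈ π ^ (-(N:ℤ)) • L := ⟨x, hx, rfl⟩
  have := hbd _ (hsub hmem) j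
  have heval : (π ^ (-(N:ℤ)) • x) j = π ^ (-(N:ℤ)) * x j := rfl
  rw [heval, D.v_mul, D.v_zpow hπ0, hπ] at this
  have hqN : ((q:ℝ)⁻¹) ^ (-(N:ℤ)) = (q:ℝ) ^ (N:ℤ) := by
    rw [inv_zpow', neg_neg]
  rw [hqN] at this
  have : (q:ℝ) ^ (N:ℤ) ≤ C / D.v (x j) := by
    rw [le_div_iff₀ hvj]; exact this
  rw [zpow_natCast] at this
  linarith

end NonarchCDVF
namespace NonarchCDVF

variable {E : Type*} [Field E] {q : ℕ} (D : NonarchCDVF E q) {n : ℕ}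

/-- a finite residue system inside the valuation ring -/
lemma exists_residue_system : ∃ S : Finset E, (∀ s ∈ S, D.v s ≤ 1) ∧
    ∀ x : E, D.v x ≤ 1 → ∃ s ∈ S, D.v (x - s) < 1 := by
  classical
  obtain ⟨S, -, hS⟩ := D.residue_card
  refine ⟨S.filter (fun s => D.v s ≤ 1), fun s hs => (Finset.mem_filter.mp hs).2, ?_⟩
  intro x hx
  obtain ⟨s, ⟨hsS, hsv⟩, -⟩ := hS x hx
  have hsle : D.v s ≤ 1 := by
    have : s = x - (x - s) := by ring
    rw [this]
    calc D.v (x - (x - s)) = D.v (x + (-(x - s))) := by ring_nf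
      _ ≤ max (D.v x) (D.v (-(x - s))) := D.v_add _ _
      _ = max (D.v x) (D.v (x - s)) := by rw [D.v_neg]
      _ ≤ 1 := max_le hx hsv.le
  exact ⟨s, Finset.mem_filter.mpr ⟨hsS, hsle⟩, hsv⟩

/-- a lattice has a finite system of representatives modulo `π • L0` -/
lemma exists_reps {L0 : Set (Fin n → E)} (hL0 : D.IsLattice L0) {π : E}
    (hπ0 : π ≠ 0) (hπ : D.v π = (q:ℝ)⁻¹) :
    ∃ V : Set (Fin n → E), V.Finite ∧ ∀ x ∈ L0, ∃ w ∈ V, x - w ∈ π • L0 := by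
  classical
  have hL0' := hL0
  obtain ⟨S, hSv, hSrep⟩ := D.exists_residue_system
  obtain ⟨B, hB, -⟩ := hL0'
  refine ⟨Set.range (fun f : (↥B → ↥S) => ∑ b ∈ B.attach, ((f b : E) • (b : Fin n → E))),
    Set.finite_range _, ?_⟩
  intro x hx
  rw [hB] at hx
  obtain ⟨c, hc, rfl⟩ := hx
  -- choose representatives
  have hch : ∀ b : Fin n → E, ∃ s : E, s ∈ S ∧ D.v (c b - s) < 1 :=
    fun b => hSrep (c b) (hc b)
  choose s hsS hsv using hch
  set f : ↥B → ↥S := fun b => ⟨s (b : Fin n → E), hsS _⟩ with hf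
  refine ⟨∑ b ∈ B.attach, ((f b : E) • (b : Fin n → E)), ⟨f, rfl⟩, ?_⟩
  have hw : ∑ b ∈ B.attach, ((f b : E) • (b : Fin n → E)) = ∑ b ∈ B, s b • b :=
    Finset.sum_attach B (fun b => s b • b)
  rw [hw, ← Finset.sum_sub_distrib]
  have hterm : ∀ b ∈ B, c b • b - s b • b ∈ π • L0 := by
    intro b hb
    have hlt : D.v (c b - s b) < 1 := hsv b
    have hle : D.v ((c b - s b) * π⁻¹) ≤ 1 := by
      rw [D.v_mul, D.v_inv hπ0, hπ, inv_inv]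
      calc D.v (c b - s b) * (q:ℝ) ≤ (q:ℝ)⁻¹ * (q:ℝ) :=
            mul_le_mul_of_nonneg_right (D.v_le_qinv_of_lt_one hlt) D.qR_pos.le
        _ = 1 := inv_mul_cancel₀ D.qR_pos.ne'
    have hbL : b ∈ L0 := by rw [hB]; exact D.mem_latticeOf_self B hb
    refine ⟨((c b - s b) * π⁻¹) • b, D.lat_smul_mem hL0 hle hbL, ?_⟩
    show π • (((c b - s b) * π⁻¹) • b) = c b • b - s b • b
    rw [smul_smul, mul_comm π, mul_assoc, inv_mul_cancel₀ hπ0, mul_one, sub_smul]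
  refine setSum_mem (π • L0)
    ⟨0, D.lat_zero_mem hL0, by show π • (0 : Fin n → E) = 0; rw [smul_zero]⟩ ?_ B _ hterm
  rintro u ⟨u', hu', rfl⟩ v ⟨v', hv', rfl⟩
  refine ⟨u' + v', D.lat_add_mem hL0 hu' hv', ?_⟩
  show π • (u' + v') = π • u' + π • v'
  rw [smul_add]

/-- there are only finitely many lattices between `π • L0` and `L0` -/
lemma finite_sandwich {L0 : Set (Fin n → E)} (hL0 : D.IsLattice L0) {π : E}
    (hπ0 : π ≠ 0) (hπ : D.v π = (q:ℝ)⁻¹) :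
    {M : Set (Fin n → E) | D.IsLattice M ∧ π • L0 ⊆ M ∧ M ⊆ L0}.Finite := by
  obtain ⟨V, hVfin, hVrep⟩ := D.exists_reps hL0 hπ0 hπ
  set SS := {M : Set (Fin n → E) | D.IsLattice M ∧ π • L0 ⊆ M ∧ M ⊆ L0} with hSS
  have hinj : Set.InjOn (fun M => M ∩ V) SS := by
    rintro M ⟨hMlat, hMlo, hMhi⟩ M' ⟨hM'lat, hM'lo, hM'hi⟩ heq
    have key : ∀ A A' : Set (Fin n → E), D.IsLattice A → D.IsLattice A' →
        π • L0 ⊆ A → A ⊆ L0 → π • L0 ⊆ A' → A ∩ V = A' ∩ V → A ⊆ A' := by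
      intro A A' hA hA' hAlo hAhi hA'lo hAV
      intro x hxA
      obtain ⟨w, hwV, hwd⟩ := hVrep x (hAhi hxA)
      have hwA : w ∈ A := by
        have : w = x - (x - w) := by ring
        rw [this]
        exact D.lat_sub_mem hA hxA (hAlo hwd)
      have hwA' : w ∈ A' := by
        have : w ∈ A' ∩ V := hAV ▸ (⟨hwA, hwV⟩ : w ∈ A ∩ V)
        exact this.1
      have : x = w + (x - w) := by ring
      rw [this]
      exact D.lat_add_mem hA' hwA' (hA'lo hwd)
    exact le_antisymm (key M M' hMlat hM'lat hMlo hMhi hM'lo heq)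
      (key M' M hM'lat hMlat hM'lo hM'hi hMlo heq.symm)
  refine Set.Finite.of_finite_image ?_ hinj
  refine Set.Finite.subset hVfin.finite_subsets ?_
  rintro t ⟨M, -, rfl⟩
  exact Set.inter_subset_right

end NonarchCDVF
namespace NonarchCDVF

variable {E : Type*} [Field E] {q : ℕ} (D : NonarchCDVF E q) {n : ℕ}

lemma chain_of_pairwise (hn : 1 ≤ n) (T : Set (Set (Fin n → E)))
    (hTlat : ∀ L ∈ T, D.IsLattice L) (hTne : T.Nonempty)
    (hTscale : ∀ L ∈ T, ∀ a : E, a ≠ 0 → a • L ∈ T)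
    (hpair : ∀ L ∈ T, ∀ L' ∈ T, L ⊆ L' ∨ L' ⊆ L) :
    ∃ (r : ℕ) (L : Fin (r + 1) → Set (Fin n → E)),
      (∀ i, D.IsLattice (L i)) ∧
      (∀ i : Fin r, L i.succ ⊂ L i.castSucc) ∧
      D.maxIdealSmul (L 0) ⊂ L (Fin.last r) ∧
      T = {L' | ∃ a : E, a ≠ 0 ∧ ∃ i, L' = a • L i} := by
  classical
  obtain ⟨π, hπ0, hπ⟩ := D.exists_unif
  obtain ⟨L0, hL0T⟩ := hTne
  have hL0 : D.IsLattice L0 := hTlat L0 hL0T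
  have hπlt : D.v π < 1 := by
    rw [hπ, inv_lt_one_iff₀]; right; exact D.one_lt_qR
  set F : Set (Set (Fin n → E)) := {M | M ∈ T ∧ π • L0 ⊂ M ∧ M ⊆ L0} with hF
  -- every element of T is a scaling of an element of F
  have hrep : ∀ L ∈ T, ∃ k : ℤ, π ^ k • L ∈ F := by
    intro L hLT
    have hLlat := hTlat L hLT
    set K : Set ℤ := {k : ℤ | π ^ k • L ⊆ L0} with hK
    have hKne : ∃ k, k ∈ K := by
      obtain ⟨N, hN⟩ := D.exists_scale_subset hLlat hL0 hπ0 hπ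
      exact ⟨(N : ℤ), by rw [hK]; simp only [Set.mem_setOf_eq, zpow_natCast]; exact hN⟩
    have hKup : ∀ k ∈ K, ∀ k' : ℤ, k ≤ k' → k' ∈ K := by
      intro k hk k' hkk'
      have : π ^ k' • L = π ^ (k' - k) • (π ^ k • L) := by
        rw [smul_smul, ← zpow_add₀ hπ0, sub_add_cancel]
      rw [hK, Set.mem_setOf_eq, this]
      have h1 : π ^ (k' - k) • (π ^ k • L) ⊆ π ^ (k' - k) • L0 :=
        Set.smul_set_mono hk
      refine h1.trans (D.smul_lat_subset hL0 ?_)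
      rw [D.v_zpow hπ0, hπ]
      calc ((q:ℝ)⁻¹) ^ (k' - k) ≤ ((q:ℝ)⁻¹) ^ (0:ℤ) := by
            apply zpow_le_zpow_right_of_le_one₀ (inv_pos.mpr D.qR_pos)
              (inv_le_one_of_one_le₀ D.one_lt_qR.le) (by omega)
        _ = 1 := zpow_zero _
    have hKbdd : ∃ b : ℤ, ∀ k, k ∈ K → b ≤ k := by
      obtain ⟨N, hN⟩ := D.exists_scale_not_subset hn hLlat hL0 hπ0 hπ
      refine ⟨-(N:ℤ), fun k hk => ?_⟩
      by_contra h
      push_neg at h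
      exact hN (hKup k hk (-(N:ℤ)) h.le)
    obtain ⟨k0, hk0K, hk0least⟩ := Int.exists_least_of_bdd hKbdd hKne
    refine ⟨k0, ?_⟩
    have hMT : π ^ k0 • L ∈ T := hTscale L hLT _ (zpow_ne_zero k0 hπ0)
    have hnotsub : ¬ (π ^ k0 • L ⊆ π • L0) := by
      intro hsub
      have h1 : π ^ (k0 - 1) • L ⊆ L0 := by
        have : π ^ (k0 - 1) • L = π⁻¹ • (π ^ k0 • L) := by
          rw [smul_smul, ← zpow_neg_one, ← zpow_add₀ hπ0]
          congr 2
          omega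
        rw [this]
        have h2 : π⁻¹ • (π ^ k0 • L) ⊆ π⁻¹ • (π • L0) := Set.smul_set_mono hsub
        have h3 : π⁻¹ • (π • L0) = L0 := by
          rw [smul_smul, inv_mul_cancel₀ hπ0, one_smul]
        rwa [h3] at h2
      have := hk0least _ h1
      omega
    have hsub2 : π • L0 ⊆ π ^ k0 • L := by
      rcases hpair _ hMT _ (hTscale L0 hL0T π hπ0) with h | h
      · exact absurd h hnotsub
      · exact h
    refine ⟨hMT, ⟨hsub2, fun h => hnotsub h⟩, hk0K⟩
  -- F is finite and nonempty
  have hFfin : F.Finite := by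
    refine Set.Finite.subset (D.finite_sandwich hL0 hπ0 hπ) ?_
    rintro M ⟨hMT, hMlo, hMhi⟩
    exact ⟨hTlat M hMT, hMlo.1, hMhi⟩
  have hL0F : L0 ∈ F :=
    ⟨hL0T, D.smul_lat_ssubset hn hL0 hπ0 hπlt, subset_rfl⟩
  set Fs : Finset (Set (Fin n → E)) := hFfin.toFinset with hFs
  have hL0Fs : L0 ∈ Fs := hFfin.mem_toFinset.mpr hL0F
  have hFscard : 1 ≤ Fs.card := Finset.card_pos.mpr ⟨L0, hL0Fs⟩
  set r : ℕ := Fs.card - 1 with hr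
  have hcard : Fs.card = r + 1 := by omega
  -- counting function
  set cnt : Set (Fin n → E) → ℕ := fun M => (Fs.filter (fun M' => M ⊂ M')).card with hcnt
  have hcnt_lt : ∀ M ∈ Fs, cnt M < Fs.card := by
    intro M hM
    have hsub : Fs.filter (fun M' => M ⊂ M') ⊆ Fs.erase M := by
      intro M' hM'
      rw [Finset.mem_filter] at hM'
      exact Finset.mem_erase.mpr ⟨fun h => (h ▸ hM'.2).ne rfl, hM'.1⟩
    calc cnt M ≤ (Fs.erase M).card := Finset.card_le_card hsub
      _ < Fs.card := Finset.card_erase_lt_of_mem hM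
  have hcnt_anti : ∀ A ∈ F, ∀ A' ∈ F, A ⊂ A' → cnt A' < cnt A := by
    intro A hA A' hA' hss
    refine Finset.card_lt_card ?_
    rw [Finset.ssubset_def]
    constructor
    · intro M hM
      rw [Finset.mem_filter] at hM ⊢
      exact ⟨hM.1, hss.trans hM.2⟩
    · intro h
      have : A' ∈ Fs.filter (fun M' => A ⊂ M') :=
        Finset.mem_filter.mpr ⟨hFfin.mem_toFinset.mpr hA', hss⟩
      have := h this
      rw [Finset.mem_filter] at this
      exact this.2.ne rfl
  have hcnt_inj : ∀ A ∈ F, ∀ A' ∈ F, cnt A = cnt A' → A = A' := by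
    intro A hA A' hA' heq
    by_contra hne
    have hcomp := hpair A hA.1 A' hA'.1
    rcases hcomp with h | h
    · have : A ⊂ A' := ⟨h, fun h' => hne (le_antisymm h h')⟩
      have := hcnt_anti A hA A' hA' this
      omega
    · have : A' ⊂ A := ⟨h, fun h' => hne (le_antisymm h' h)⟩
      have := hcnt_anti A' hA' A hA this
      omega
  -- the enumeration
  set G : ↥Fs → Fin (r + 1) := fun M => ⟨cnt M, hcard ▸ hcnt_lt M M.2⟩ with hG
  have hGinj : Function.Injective G := by
    intro A A' h
    have h1 : cnt (A : Set (Fin n → E)) = cnt (A' : Set (Fin n → E)) := by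
      have := congrArg Fin.val h
      simpa [hG] using this
    exact Subtype.ext (hcnt_inj _ (hFfin.mem_toFinset.mp A.2) _
      (hFfin.mem_toFinset.mp A'.2) h1)
  have hGbij : Function.Bijective G := by
    rw [Fintype.bijective_iff_injective_and_card]
    refine ⟨hGinj, ?_⟩
    rw [Fintype.card_coe, Fintype.card_fin, hcard]
  set e := Equiv.ofBijective G hGbij with he
  set Lf : Fin (r + 1) → Set (Fin n → E) := fun i => (e.symm i : Set (Fin n → E)) with hLf
  have hLfF : ∀ i, Lf i ∈ F := fun i => hFfin.mem_toFinset.mp (e.symm i).2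
  have hcntLf : ∀ i, cnt (Lf i) = (i : ℕ) := by
    intro i
    have : G (e.symm i) = i := e.apply_symm_apply i
    have := congrArg Fin.val this
    simpa [hG] using this
  have hLfsurj : ∀ M ∈ F, ∃ i, Lf i = M := by
    intro M hM
    refine ⟨e ⟨M, hFfin.mem_toFinset.mpr hM⟩, ?_⟩
    show ((e.symm (e ⟨M, hFfin.mem_toFinset.mpr hM⟩)) : Set (Fin n → E)) = M
    rw [e.symm_apply_apply]
  -- L 0 is L0
  have hL00 : Lf 0 = L0 := by
    have hc0 : cnt L0 = 0 := by
      rw [hcnt]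
      simp only [Finset.card_eq_zero]
      rw [Finset.filter_eq_empty_iff]
      intro M hM
      have hMF := hFfin.mem_toFinset.mp hM
      intro hss
      exact (hss.trans_subset hMF.2.2).ne rfl
    refine hcnt_inj _ (hLfF 0) _ hL0F ?_
    rw [hcntLf, hc0]
    rfl
  refine ⟨r, Lf, fun i => hTlat _ (hLfF i).1, ?_, ?_, ?_⟩
  · -- consecutive strict inclusions
    intro i
    have h1 : cnt (Lf i.succ) = (i : ℕ) + 1 := by rw [hcntLf]; simp [Fin.val_succ]
    have h2 : cnt (Lf i.castSucc) = (i : ℕ) := by rw [hcntLf]; simp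
    have hne : Lf i.succ ≠ Lf i.castSucc := by
      intro h; rw [h, h2] at h1; omega
    rcases hpair _ (hLfF i.succ).1 _ (hLfF i.castSucc).1 with h | h
    · exact ⟨h, fun h' => hne (le_antisymm h h')⟩
    · exfalso
      have hss : Lf i.castSucc ⊂ Lf i.succ := ⟨h, fun h' => hne (le_antisymm h' h)⟩
      have := hcnt_anti _ (hLfF i.castSucc) _ (hLfF i.succ) hss
      omega
  · -- max ideal
    rw [D.maxIdealSmul_eq (hTlat _ (hLfF 0).1) hπ, hL00]
    exact (hLfF (Fin.last r)).2.1
  · -- T is the set of scalings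
    ext L
    constructor
    · intro hLT
      obtain ⟨k, hk⟩ := hrep L hLT
      obtain ⟨i, hi⟩ := hLfsurj _ hk
      refine ⟨(π ^ k)⁻¹, inv_ne_zero (zpow_ne_zero k hπ0), i, ?_⟩
      rw [hi, smul_smul, inv_mul_cancel₀ (zpow_ne_zero k hπ0), one_smul]
    · rintro ⟨a, ha0, i, rfl⟩
      exact hTscale _ (hLfF i).1 a ha0

end NonarchCDVF
namespace NonarchCDVF

variable {E : Type*} [Field E] {q : ℕ} (D : NonarchCDVF E q) {n : ℕ}

section Chain

variable {r : ℕ} {Lf : Fin (r + 1) → Set (Fin n → E)}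

lemma chain_mono (hchain : ∀ i : Fin r, Lf i.succ ⊂ Lf i.castSucc) :
    ∀ i j : Fin (r + 1), i ≤ j → Lf j ⊆ Lf i := by
  intro i j
  induction j using Fin.induction with
  | zero =>
    intro h
    have : i = 0 := le_antisymm h (Fin.zero_le i)
    rw [this]
  | succ k ih =>
    intro h
    rcases eq_or_lt_of_le h with heq | hlt
    · rw [heq]
    · have h2 : i ≤ k.castSucc := by
        rw [Fin.le_def]
        rw [Fin.lt_def] at hlt
        simp only [Fin.val_succ] at hlt
        simp only [Fin.coe_castSucc]
        omega
      exact (hchain k).1.trans (ih h2)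

/-- from the chain data: scaling by something of valuation `≤ q⁻¹` lands inside any member -/
lemma chain_small_smul (hlat : ∀ i, D.IsLattice (Lf i))
    (hchain : ∀ i : Fin r, Lf i.succ ⊂ Lf i.castSucc)
    (hmax : D.maxIdealSmul (Lf 0) ⊂ Lf (Fin.last r))
    {c : E} (hc : D.v c ≤ (q:ℝ)⁻¹) (i j : Fin (r + 1)) :
    c • Lf i ⊆ Lf j := by
  obtain ⟨π, hπ0, hπ⟩ := D.exists_unif
  have h1 : π • Lf 0 ⊆ Lf (Fin.last r) := by
    rw [← D.maxIdealSmul_eq (hlat 0) hπ]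
    exact hmax.1
  have hmono := chain_mono hchain
  have hstep1 : c • Lf i ⊆ π • Lf i := by
    rintro z ⟨x, hx, rfl⟩
    refine ⟨(π⁻¹ * c) • x, D.lat_smul_mem (hlat i) ?_ hx, ?_⟩
    · rw [D.v_mul, D.v_inv hπ0, hπ, inv_inv]
      calc (q:ℝ) * D.v c ≤ (q:ℝ) * (q:ℝ)⁻¹ :=
            mul_le_mul_of_nonneg_left hc D.qR_pos.le
        _ = 1 := mul_inv_cancel₀ D.qR_pos.ne'
    · show π • ((π⁻¹ * c) • x) = c • x
      rw [smul_smul, ← mul_assoc, mul_inv_cancel₀ hπ0, one_mul]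
  have hstep2 : π • Lf i ⊆ π • Lf 0 := Set.smul_set_mono (hmono 0 i (Fin.zero_le i))
  have hstep3 : Lf (Fin.last r) ⊆ Lf j := hmono j (Fin.last r) (Fin.le_last j)
  exact hstep1.trans (hstep2.trans (h1.trans hstep3))

lemma pairwise_of_chain (hlat : ∀ i, D.IsLattice (Lf i))
    (hchain : ∀ i : Fin r, Lf i.succ ⊂ Lf i.castSucc)
    (hmax : D.maxIdealSmul (Lf 0) ⊂ Lf (Fin.last r))
    {T : Set (Set (Fin n → E))}
    (hT : T = {L' | ∃ a : E, a ≠ 0 ∧ ∃ i, L' = a • Lf i}) :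
    ∀ L ∈ T, ∀ L' ∈ T, L ⊆ L' ∨ L' ⊆ L := by
  have hmono := chain_mono hchain
  intro L hL L' hL'
  rw [hT] at hL hL'
  obtain ⟨a, ha0, i, rfl⟩ := hL
  obtain ⟨b, hb0, j, rfl⟩ := hL'
  set c : E := a * b⁻¹ with hc
  have hc0 : c ≠ 0 := mul_ne_zero ha0 (inv_ne_zero hb0)
  have key : c • Lf i ⊆ Lf j ∨ Lf j ⊆ c • Lf i := by
    obtain ⟨m, hm⟩ := D.discrete c hc0
    rcases lt_trichotomy m 0 with hm0 | hm0 | hm0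
    · left
      refine D.chain_small_smul hlat hchain hmax ?_ i j
      rw [hm]
      calc (q:ℝ) ^ m ≤ (q:ℝ) ^ (-1:ℤ) := zpow_le_zpow_right₀ D.one_lt_qR.le (by omega)
        _ = (q:ℝ)⁻¹ := by simp
    · -- m = 0 : c is a unit
      have hvc : D.v c = 1 := by rw [hm, hm0, zpow_zero]
      have hvcinv : D.v c⁻¹ = 1 := by rw [D.v_inv hc0, hvc, inv_one]
      rcases le_total i j with hij | hij
      · right
        intro x hx
        refine ⟨c⁻¹ • x, ?_, by show c • (c⁻¹ • x) = x; rw [smul_smul, mul_inv_cancel₀ hc0, one_smul]⟩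
        exact hmono i j hij (D.lat_smul_mem (hlat j) hvcinv.le hx)
      · left
        rintro z ⟨x, hx, rfl⟩
        exact hmono j i hij (D.lat_smul_mem (hlat i) hvc.le hx)
    · right
      have hinv : D.v c⁻¹ ≤ (q:ℝ)⁻¹ := by
        rw [D.v_inv hc0, hm, ← zpow_neg]
        calc (q:ℝ) ^ (-m) ≤ (q:ℝ) ^ (-1:ℤ) := zpow_le_zpow_right₀ D.one_lt_qR.le (by omega)
          _ = (q:ℝ)⁻¹ := by simp
      have h2 : c⁻¹ • Lf j ⊆ Lf i := D.chain_small_smul hlat hchain hmax hinv j i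
      intro x hx
      refine ⟨c⁻¹ • x, h2 ⟨x, hx, rfl⟩, by show c • (c⁻¹ • x) = x; rw [smul_smul, mul_inv_cancel₀ hc0, one_smul]⟩
  rcases key with h | h
  · left
    have : a • Lf i = b • (c • Lf i) := by
      rw [smul_smul, hc, mul_comm b, mul_assoc, inv_mul_cancel₀ hb0, mul_one]
    rw [this]
    exact Set.smul_set_mono h
  · right
    have : a • Lf i = b • (c • Lf i) := by
      rw [smul_smul, hc, mul_comm b, mul_assoc, inv_mul_cancel₀ hb0, mul_one]
    rw [this]
    intro x hx
    exact Set.smul_set_mono h hx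

end Chain

end NonarchCDVF
namespace NonarchCDVF

variable {E : Type*} [Field E] {q : ℕ} (D : NonarchCDVF E q) {n : ℕ}

section Chain2

variable {r : ℕ} {Lf : Fin (r + 1) → Set (Fin n → E)}

lemma chain_norm_range (hlat : ∀ i, D.IsLattice (Lf i))
    (hchain : ∀ i : Fin r, Lf i.succ ⊂ Lf i.castSucc)
    (hmax : D.maxIdealSmul (Lf 0) ⊂ Lf (Fin.last r))
    {z : Fin n → E} (hz : z ≠ 0) (i : Fin (r + 1)) :
    D.latticeNorm (Lf 0) z ≤ D.latticeNorm (Lf i) z ∧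
    (D.latticeNorm (Lf i) z = D.latticeNorm (Lf 0) z ∨
     D.latticeNorm (Lf i) z = (q:ℝ) * D.latticeNorm (Lf 0) z) := by
  obtain ⟨π, hπ0, hπ⟩ := D.exists_unif
  have hmono := chain_mono hchain
  have h1 : π • Lf 0 ⊆ Lf (Fin.last r) := by
    rw [← D.maxIdealSmul_eq (hlat 0) hπ]
    exact hmax.1
  have hsub : π • Lf 0 ⊆ Lf i := h1.trans (hmono i (Fin.last r) (Fin.le_last i))
  have hlow : D.latticeNorm (Lf 0) z ≤ D.latticeNorm (Lf i) z :=
    D.latticeNorm_mono (hlat i) (hmono 0 i (Fin.zero_le i)) z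
  have hsmul : D.latticeNorm (π • Lf 0) z = (q:ℝ) * D.latticeNorm (Lf 0) z := by
    rw [D.latticeNorm_smul_lat hπ0 z, hπ, inv_inv]
  have hup : D.latticeNorm (Lf i) z ≤ (q:ℝ) * D.latticeNorm (Lf 0) z := by
    rw [← hsmul]
    exact D.latticeNorm_mono (D.smul_isLattice (hlat 0) hπ0) hsub z
  refine ⟨hlow, ?_⟩
  obtain ⟨-, α, hα⟩ := D.latticeNorm_mem (hlat 0) hz
  obtain ⟨-, γ, hγ⟩ := D.latticeNorm_mem (hlat i) hz
  have hq := D.one_lt_qR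
  have hqq : (q:ℝ) * D.latticeNorm (Lf 0) z = (q:ℝ) ^ (α + 1) := by
    rw [hα, zpow_add_one₀ (by linarith), mul_comm]
  have hle1 : α ≤ γ := by
    rw [hα, hγ] at hlow
    exact (zpow_le_zpow_iff_right₀ hq).mp hlow
  have hle2 : γ ≤ α + 1 := by
    rw [hγ, hqq] at hup
    exact (zpow_le_zpow_iff_right₀ hq).mp hup
  rcases eq_or_lt_of_le hle1 with heq | hlt
  · left; rw [hγ, hα, ← heq]
  · right
    have : γ = α + 1 := by omega
    rw [hγ, hqq, this]

lemma norms_of_chain (hlat : ∀ i, D.IsLattice (Lf i))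
    (hchain : ∀ i : Fin r, Lf i.succ ⊂ Lf i.castSucc)
    (hmax : D.maxIdealSmul (Lf 0) ⊂ Lf (Fin.last r))
    {T : Set (Set (Fin n → E))}
    (hT : T = {L' | ∃ a : E, a ≠ 0 ∧ ∃ i, L' = a • Lf i}) :
    ∀ x y : Fin n → E, x ≠ 0 → y ≠ 0 →
      (∀ L ∈ T, D.latticeNorm L y ≤ D.latticeNorm L x) ∨
      (∀ L ∈ T, D.latticeNorm L x ≤ D.latticeNorm L y) := by
  have hmono := chain_mono hchain
  have hq := D.one_lt_qR
  intro x y hx0 hy0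
  have hmon : ∀ z : Fin n → E, ∀ i j : Fin (r + 1), i ≤ j →
      D.latticeNorm (Lf i) z ≤ D.latticeNorm (Lf j) z :=
    fun z i j hij => D.latticeNorm_mono (hlat j) (hmono i j hij) z
  -- reduce to the unscaled lattices
  have hred : ∀ z w : Fin n → E,
      (∀ i, D.latticeNorm (Lf i) w ≤ D.latticeNorm (Lf i) z) →
      (∀ L ∈ T, D.latticeNorm L w ≤ D.latticeNorm L z) := by
    intro z w hzw L hL
    rw [hT] at hL
    obtain ⟨a, ha0, i, rfl⟩ := hL
    rw [D.latticeNorm_smul_lat ha0, D.latticeNorm_smul_lat ha0]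
    exact mul_le_mul_of_nonneg_left (hzw i) (inv_nonneg.mpr (D.v_nonneg a))
  obtain ⟨-, α, hα⟩ := D.latticeNorm_mem (hlat 0) hx0
  obtain ⟨-, β, hβ⟩ := D.latticeNorm_mem (hlat 0) hy0
  have hrangex := fun i => D.chain_norm_range hlat hchain hmax hx0 i
  have hrangey := fun i => D.chain_norm_range hlat hchain hmax hy0 i
  rcases lt_trichotomy α β with hαβ | hαβ | hαβ
  · -- x-norm smaller everywhere
    right
    refine hred y x fun i => ?_
    have h1 : D.latticeNorm (Lf i) x ≤ (q:ℝ) * D.latticeNorm (Lf 0) x := by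
      rcases (hrangex i).2 with h | h
      · rw [h]; nlinarith [D.latticeNorm_pos (hlat 0) hx0]
      · rw [h]
    have h2 : (q:ℝ) * D.latticeNorm (Lf 0) x ≤ D.latticeNorm (Lf 0) y := by
      rw [hα, hβ]
      have hh : (q:ℝ) * (q:ℝ)^α = (q:ℝ)^(α+1) := by
        rw [zpow_add_one₀ (by linarith : (q:ℝ) ≠ 0), mul_comm]
      rw [hh]
      exact zpow_le_zpow_right₀ hq.le (by omega)
    exact h1.trans (h2.trans (hrangey i).1)
  · -- equal leading values
    by_contra hcon
    push_neg at hcon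
    obtain ⟨⟨L1, hL1, hgt1⟩, ⟨L2, hL2, hgt2⟩⟩ := hcon
    -- convert to indices
    have hidx : ∀ L ∈ T, ∀ z w : Fin n → E,
        D.latticeNorm L z < D.latticeNorm L w → ∃ i : Fin (r+1),
        D.latticeNorm (Lf i) z < D.latticeNorm (Lf i) w := by
      intro L hL z w hzw
      rw [hT] at hL
      obtain ⟨a, ha0, i, rfl⟩ := hL
      rw [D.latticeNorm_smul_lat ha0, D.latticeNorm_smul_lat ha0] at hzw
      refine ⟨i, lt_of_mul_lt_mul_left hzw (inv_nonneg.mpr (D.v_nonneg a))⟩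
    obtain ⟨i, hi⟩ := hidx L1 hL1 x y hgt1
    obtain ⟨j, hj⟩ := hidx L2 hL2 y x hgt2
    have hA : D.latticeNorm (Lf 0) y = D.latticeNorm (Lf 0) x := by rw [hα, hβ, hαβ]
    have hApos := D.latticeNorm_pos (hlat 0) hx0
    have hAlt : D.latticeNorm (Lf 0) x < (q:ℝ) * D.latticeNorm (Lf 0) x := by nlinarith
    -- at i : norm x = A, norm y = qA
    have hix : D.latticeNorm (Lf i) x = D.latticeNorm (Lf 0) x := by
      rcases (hrangex i).2 with h | h
      · exact h
      · exfalso
        rcases (hrangey i).2 with h' | h' <;> rw [h, h', hA] at hi <;> nlinarith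
    have hiy : D.latticeNorm (Lf i) y = (q:ℝ) * D.latticeNorm (Lf 0) x := by
      rcases (hrangey i).2 with h' | h'
      · exfalso; rw [hix, h', hA] at hi; exact lt_irrefl _ hi
      · rw [h', hA]
    have hjy : D.latticeNorm (Lf j) y = D.latticeNorm (Lf 0) x := by
      rcases (hrangey j).2 with h' | h'
      · rw [h', hA]
      · exfalso
        rcases (hrangex j).2 with h | h <;> rw [h, h', hA] at hj <;> nlinarith
    have hjx : D.latticeNorm (Lf j) x = (q:ℝ) * D.latticeNorm (Lf 0) x := by
      rcases (hrangex j).2 with h | h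
      · exfalso; rw [hjy, h] at hj; exact lt_irrefl _ hj
      · exact h
    rcases le_total i j with hij | hij
    · have := hmon y i j hij
      rw [hiy, hjy] at this
      nlinarith
    · have := hmon x j i hij
      rw [hjx, hix] at this
      nlinarith
  · left
    refine hred x y fun i => ?_
    have h1 : D.latticeNorm (Lf i) y ≤ (q:ℝ) * D.latticeNorm (Lf 0) y := by
      rcases (hrangey i).2 with h | h
      · rw [h]; nlinarith [D.latticeNorm_pos (hlat 0) hy0]
      · rw [h]
    have h2 : (q:ℝ) * D.latticeNorm (Lf 0) y ≤ D.latticeNorm (Lf 0) x := by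
      rw [hα, hβ]
      have hh : (q:ℝ) * (q:ℝ)^β = (q:ℝ)^(β+1) := by
        rw [zpow_add_one₀ (by linarith : (q:ℝ) ≠ 0), mul_comm]
      rw [hh]
      exact zpow_le_zpow_right₀ hq.le (by omega)
    exact h1.trans (h2.trans (hrangex i).1)

end Chain2

lemma pairwise_of_norm {T : Set (Set (Fin n → E))} (hTlat : ∀ L ∈ T, D.IsLattice L)
    (hnorm : ∀ x y : Fin n → E, x ≠ 0 → y ≠ 0 →
      (∀ L ∈ T, D.latticeNorm L y ≤ D.latticeNorm L x) ∨
      (∀ L ∈ T, D.latticeNorm L x ≤ D.latticeNorm L y)) :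
    ∀ L ∈ T, ∀ L' ∈ T, L ⊆ L' ∨ L' ⊆ L := by
  intro L hL L' hL'
  by_contra hcon
  push_neg at hcon
  obtain ⟨h1, h2⟩ := hcon
  rw [Set.not_subset] at h1 h2
  obtain ⟨x, hxL, hxL'⟩ := h1
  obtain ⟨y, hyL', hyL⟩ := h2
  have hx0 : x ≠ 0 := fun h => hxL' (h ▸ D.lat_zero_mem (hTlat L' hL'))
  have hy0 : y ≠ 0 := fun h => hyL (h ▸ D.lat_zero_mem (hTlat L hL))
  rcases hnorm x y hx0 hy0 with h | h
  · exact hyL (D.mem_of_latticeNorm_le_one (hTlat L hL) hy0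
      ((h L hL).trans (D.latticeNorm_le_one hxL)))
  · exact hxL' (D.mem_of_latticeNorm_le_one (hTlat L' hL') hx0
      ((h L' hL').trans (D.latticeNorm_le_one hyL')))

end NonarchCDVF



open NonarchCDVF in
/-- Let `T` be a nonempty set of `O_E`-lattices in `E^n` stable under scaling.
Then conditions (i), (ii), (iii) are equivalent. -/
theorem statement1 {E : Type*} [Field E] {q : ℕ} (D : NonarchCDVF E q) (n : ℕ) (hn : 1 ≤ n)
    (T : Set (Set (Fin n → E))) (hTlat : ∀ L ∈ T, D.IsLattice L) (hTne : T.Nonempty)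
    (hTscale : ∀ L ∈ T, ∀ a : E, a ≠ 0 → a • L ∈ T) :
    ((∀ x y : Fin n → E, x ≠ 0 → y ≠ 0 →
        (∀ L ∈ T, D.latticeNorm L y ≤ D.latticeNorm L x) ∨
        (∀ L ∈ T, D.latticeNorm L x ≤ D.latticeNorm L y)) ↔
      (∀ L ∈ T, ∀ L' ∈ T, L ⊆ L' ∨ L' ⊆ L)) ∧
    ((∀ L ∈ T, ∀ L' ∈ T, L ⊆ L' ∨ L' ⊆ L) ↔
      (∃ (r : ℕ) (L : Fin (r + 1) → Set (Fin n → E)),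
        (∀ i, D.IsLattice (L i)) ∧
        (∀ i : Fin r, L i.succ ⊂ L i.castSucc) ∧
        D.maxIdealSmul (L 0) ⊂ L (Fin.last r) ∧
        T = {L' | ∃ a : E, a ≠ 0 ∧ ∃ i, L' = a • L i})) := by
  constructor
  · constructor
    · exact fun hnorm => D.pairwise_of_norm hTlat hnorm
    · intro hpair
      obtain ⟨r, Lf, hlat, hchain, hmax, hT⟩ :=
        D.chain_of_pairwise hn T hTlat hTne hTscale hpair
      exact D.norms_of_chain hlat hchain hmax hT
  · constructor
    · exact fun hpair => D.chain_of_pairwise hn T hTlat hTne hTscale hpair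
    · rintro ⟨r, Lf, hlat, hchain, hmax, hT⟩
      exact D.pairwise_of_chain hlat hchain hmax hT
end
end

section
/- Let S be a nonempty set of norms on E^n such that for every pair (x, y) of nonzero elements of E^n, either μ(x) ≥ μ(y) for all μ ∈ S, or μ(x) ≤ μ(y) for all μ ∈ S. Then there exist an integer r ≥ 0 and O_E-lattices L^0 ⊋ L^1 ⊋ … ⊋ L^r ⊋ m_E·L^0 in E^n such that every μ ∈ S can be written as μ = Σ_{i=0}^r a_i·μ_{L^i} for some real numbers a_0, …, a_r ≥ 0. -/
noncomputable section

open scoped Pointwise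

namespace S4Aux

set_option linter.unusedSectionVars false

open NonarchCDVF

variable {E : Type*} [Field E] {q : ℕ}

section VBasics

variable (D : NonarchCDVF E q)

include D in
lemma q_pos : (0:ℝ) < q := by
  have := D.one_lt_q; positivity

include D in
lemma one_lt_qR : (1:ℝ) < q := by exact_mod_cast D.one_lt_q

lemma v_nonneg (x : E) : 0 ≤ D.v x := by
  rcases eq_or_ne x 0 with rfl | h
  · rw [D.v_zero]
  · exact (D.v_pos x h).le

lemma v_one : D.v 1 = 1 := by
  have h := D.v_mul 1 1
  rw [mul_one] at h
  have h1 : (0:ℝ) < D.v 1 := D.v_pos 1 one_ne_zero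
  nlinarith

lemma v_neg (x : E) : D.v (-x) = D.v x := by
  have hm : D.v (-1) * D.v (-1) = 1 := by
    have := D.v_mul (-1) (-1); rw [neg_mul_neg, one_mul, v_one] at this; linarith
  have h1 : D.v (-1) = 1 := by nlinarith [v_nonneg D (-1)]
  have := D.v_mul (-1) x
  rw [neg_mul, one_mul, h1, one_mul] at this
  exact this

lemma v_sub_le (x y : E) : D.v (x - y) ≤ max (D.v x) (D.v y) := by
  have := D.v_add x (-y)
  rwa [v_neg D y, ← sub_eq_add_neg] at this

lemma v_inv (x : E) (hx : x ≠ 0) : D.v x⁻¹ = (D.v x)⁻¹ := by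
  have h := D.v_mul x x⁻¹
  rw [mul_inv_cancel₀ hx, v_one] at h
  have : D.v x⁻¹ * D.v x = 1 := by rw [mul_comm]; linarith
  exact eq_inv_of_mul_eq_one_left this

lemma v_pow (x : E) (k : ℕ) : D.v (x ^ k) = D.v x ^ k := by
  induction k with
  | zero => simpa using v_one D
  | succ k ih => rw [pow_succ, pow_succ, D.v_mul, ih]

lemma v_zpow (x : E) (hx : x ≠ 0) (k : ℤ) : D.v (x ^ k) = D.v x ^ k := by
  rcases k with k | k
  · simpa using v_pow D x k
  · rw [zpow_negSucc, zpow_negSucc, v_inv D _ (pow_ne_zero _ hx), v_pow]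

def unif : E := Classical.choose D.exists_uniformizer

lemma v_unif : D.v (unif D) = ((q:ℝ))⁻¹ := by
  have h := Classical.choose_spec D.exists_uniformizer
  rw [show ((q:ℝ))⁻¹ = (q:ℝ) ^ (-1 : ℤ) by simp]
  exact h

lemma unif_ne_zero : unif D ≠ 0 := by
  intro h
  have h2 := v_unif D
  rw [h, D.v_zero] at h2
  have : (0:ℝ) < (q:ℝ)⁻¹ := by
    have := q_pos D; positivity
  rw [← h2] at this; exact lt_irrefl _ this

lemma v_unif_zpow (k : ℤ) : D.v (unif D ^ k) = (q:ℝ) ^ (-k) := by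
  rw [v_zpow D _ (unif_ne_zero D), v_unif, inv_zpow, ← zpow_neg]

lemma v_unif_pow (k : ℕ) : D.v (unif D ^ k) = (q:ℝ) ^ (-(k:ℤ)) := by
  rw [← v_unif_zpow D k, zpow_natCast]

lemma v_lt_exp {x : E} (hx : x ≠ 0) {k : ℤ} (h : D.v x < (q:ℝ) ^ k) :
    D.v x ≤ (q:ℝ) ^ (k - 1) := by
  obtain ⟨m, hm⟩ := D.discrete x hx
  rw [hm] at h ⊢
  have hq := one_lt_qR D
  have hmk : m < k := by
    by_contra hc
    push_neg at hc
    exact absurd h (not_lt.2 (zpow_le_zpow_right₀ hq.le hc))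
  exact zpow_le_zpow_right₀ hq.le (by omega)

end VBasics

section NormBasics

variable (D : NonarchCDVF E q) {n : ℕ} {μ : (Fin n → E) → ℝ}

lemma norm_zero (hμ : D.IsNorm μ) : μ 0 = 0 := by
  have := hμ.1 0 0
  rw [zero_smul, D.v_zero, zero_mul] at this
  exact this

lemma norm_nonneg (hμ : D.IsNorm μ) (x : Fin n → E) : 0 ≤ μ x := by
  rcases eq_or_ne x 0 with rfl | h
  · rw [norm_zero D hμ]
  · exact (hμ.2.2 x h).le

lemma norm_neg (hμ : D.IsNorm μ) (x : Fin n → E) : μ (-x) = μ x := by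
  have h := hμ.1 (-1) x
  rw [neg_one_smul, v_neg, v_one, one_mul] at h
  exact h

lemma norm_sub_le (hμ : D.IsNorm μ) (x y : Fin n → E) :
    μ (x - y) ≤ max (μ x) (μ y) := by
  have := hμ.2.1 x (-y)
  rwa [norm_neg D hμ y, ← sub_eq_add_neg] at this

lemma norm_sum_le (hμ : D.IsNorm μ) {t : ℝ} (ht : 0 ≤ t) {ι : Type*} (s : Finset ι)
    (f : ι → Fin n → E) (h : ∀ j ∈ s, μ (f j) ≤ t) : μ (∑ j ∈ s, f j) ≤ t := by
  classical
  induction s using Finset.induction_on with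
  | empty => simpa [norm_zero D hμ] using ht
  | insert _ _ hns ih =>
    rename_i a s'
    rw [Finset.sum_insert hns]
    refine le_trans (hμ.2.1 _ _) (max_le (h a (Finset.mem_insert_self a s')) ?_)
    exact ih fun j hj => h j (Finset.mem_insert_of_mem hj)

lemma norm_add_eq (hμ : D.IsNorm μ) {x y : Fin n → E} (h : μ y < μ x) :
    μ (x + y) = μ x := by
  have h1 : μ (x + y) ≤ μ x := le_trans (hμ.2.1 x y) (by rw [max_eq_left h.le])
  have h2 : μ x ≤ max (μ (x + y)) (μ y) := by
    have := hμ.2.1 (x + y) (-y)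
    rwa [add_neg_cancel_right, norm_neg D hμ] at this
  rcases max_cases (μ (x + y)) (μ y) with ⟨he, _⟩ | ⟨he, _⟩
  · rw [he] at h2; exact le_antisymm h1 h2
  · rw [he] at h2; linarith

end NormBasics

section Cover

variable (D : NonarchCDVF E q)

lemma cover_digits (N : ℕ) (d : ℕ) : ∃ F : Finset E, ∀ a : E, D.v a ≤ (q:ℝ)^(N:ℤ) →
    ∃ f ∈ F, D.v (a - f) ≤ (q:ℝ)^((N:ℤ) - d) := by
  classical
  induction d with
  | zero => exact ⟨{0}, fun a ha => ⟨0, Finset.mem_singleton_self 0, by simpa using ha⟩⟩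
  | succ d ih =>
    obtain ⟨F, hF⟩ := ih
    obtain ⟨S0, hS0card, hS0⟩ := D.residue_card
    set t : ℤ := (N:ℤ) - d with ht
    refine ⟨(F ×ˢ S0).image (fun p => p.1 + p.2 * unif D ^ (-t)), fun a ha => ?_⟩
    obtain ⟨f, hf, hvf⟩ := hF a ha
    set b : E := (a - f) * unif D ^ t with hb
    have hvb : D.v b ≤ 1 := by
      rw [hb, D.v_mul, v_unif_zpow]
      calc D.v (a - f) * (q:ℝ) ^ (-t) ≤ (q:ℝ)^t * (q:ℝ)^(-t) := by
            apply mul_le_mul_of_nonneg_right hvf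
            positivity
        _ = 1 := by rw [← zpow_add₀ (q_pos D).ne']; simp
    obtain ⟨s, ⟨hsS, hsv⟩, _⟩ := hS0 b hvb
    refine ⟨f + s * unif D ^ (-t), Finset.mem_image.2 ⟨(f, s), Finset.mem_product.2 ⟨hf, hsS⟩, rfl⟩, ?_⟩
    have hu : unif D ^ t * unif D ^ (-t) = 1 := by
      rw [← zpow_add₀ (unif_ne_zero D)]; simp
    have hkey : a - (f + s * unif D ^ (-t)) = (b - s) * unif D ^ (-t) := by
      have : (b - s) * unif D ^ (-t) = (a - f) * (unif D ^ t * unif D ^ (-t)) - s * unif D ^ (-t) := by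
        rw [hb]; ring
      rw [this, hu]; ring
    rw [hkey, D.v_mul, v_unif_zpow, neg_neg]
    have hbs : D.v (b - s) ≤ (q:ℝ)⁻¹ := by
      rcases eq_or_ne (b - s) 0 with h0 | h0
      · rw [h0, D.v_zero]; positivity
      · have := v_lt_exp D h0 (k := 0) (by simpa using hsv)
        simpa using this
    calc D.v (b - s) * (q:ℝ)^t ≤ (q:ℝ)⁻¹ * (q:ℝ)^t := by
          apply mul_le_mul_of_nonneg_right hbs
          positivity
      _ = (q:ℝ) ^ ((N:ℤ) - (d+1:ℕ)) := by
          rw [show ((q:ℝ))⁻¹ = (q:ℝ)^(-1:ℤ) by simp,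
            ← zpow_add₀ (q_pos D).ne']
          congr 1
          push_cast
          ring

lemma cover_vec (n N M : ℕ) : ∃ F : Finset (Fin n → E), ∀ z : Fin n → E,
    (∀ j, D.v (z j) ≤ (q:ℝ)^(N:ℤ)) →
    ∃ f ∈ F, ∀ j, D.v (z j - f j) ≤ (q:ℝ)^(-(M:ℤ)) := by
  classical
  obtain ⟨F1, hF1⟩ := cover_digits D N (N + M)
  refine ⟨Fintype.piFinset (fun _ : Fin n => F1), fun z hz => ?_⟩
  have hch : ∀ j, ∃ f, f ∈ F1 ∧ D.v (z j - f) ≤ (q:ℝ)^((N:ℤ) - (N + M : ℕ)) := by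
    intro j
    obtain ⟨f, hf, hv⟩ := hF1 (z j) (hz j)
    exact ⟨f, hf, hv⟩
  choose f hf1 hf2 using hch
  refine ⟨f, Fintype.mem_piFinset.2 hf1, fun j => ?_⟩
  have := hf2 j
  rwa [show (N:ℤ) - (N + M : ℕ) = -(M:ℤ) by push_cast; ring] at this

end Cover

section VecDecomp

lemma vec_decomp {n : ℕ} (w : Fin n → E) : w = ∑ j, w j • (Pi.single j 1 : Fin n → E) := by
  funext j'
  rw [Finset.sum_apply]
  have : ∀ j : Fin n, (w j • (Pi.single j 1 : Fin n → E)) j' = if j = j' then w j' else 0 := by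
    intro j
    rcases eq_or_ne j j' with rfl | h
    · simp
    · simp [Pi.single_apply, h]
  rw [Finset.sum_congr rfl (fun j _ => this j)]
  simp

end VecDecomp

section CoordBound

variable (D : NonarchCDVF E q)

lemma norm_le_coords {n : ℕ} {μ : (Fin n → E) → ℝ} (hμ : D.IsNorm μ) :
    ∃ B : ℝ, 0 < B ∧ ∀ (t : ℝ), 0 ≤ t → ∀ x : Fin n → E,
      (∀ j, D.v (x j) ≤ t) → μ x ≤ B * t := by
  refine ⟨1 + ∑ j, μ (Pi.single j 1), by
    have : (0:ℝ) ≤ ∑ j, μ (Pi.single j 1) :=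
      Finset.sum_nonneg fun j _ => norm_nonneg D hμ _
    linarith, fun t ht x hx => ?_⟩
  set B := 1 + ∑ j, μ (Pi.single j 1) with hB
  have hB1 : ∀ j : Fin n, μ (Pi.single j 1) ≤ B := by
    intro j
    have h1 : μ (Pi.single j 1) ≤ ∑ j, μ (Pi.single j 1) :=
      Finset.single_le_sum (f := fun i => μ (Pi.single i 1))
        (fun i _ => norm_nonneg D hμ _) (Finset.mem_univ j)
    rw [hB]; linarith
  have hBpos : (0:ℝ) ≤ B := by
    have : (0:ℝ) ≤ ∑ j, μ (Pi.single j 1) :=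
      Finset.sum_nonneg fun j _ => norm_nonneg D hμ _
    rw [hB]; linarith
  calc μ x = μ (∑ j, x j • (Pi.single j 1 : Fin n → E)) := by rw [← vec_decomp]
    _ ≤ B * t := by
        apply norm_sum_le D hμ (by positivity)
        intro j _
        rw [hμ.1]
        calc D.v (x j) * μ (Pi.single j 1) ≤ t * B :=
              mul_le_mul (hx j) (hB1 j) (norm_nonneg D hμ _) ht
          _ = B * t := mul_comm _ _

lemma coord_bound : ∀ (m : ℕ) (μ : (Fin m → E) → ℝ), D.IsNorm μ →
    ∃ C : ℝ, 0 < C ∧ ∀ z : Fin m → E, ∀ j, D.v (z j) ≤ C * μ z := by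
  intro m
  induction m with
  | zero => exact fun μ _ => ⟨1, one_pos, fun z j => j.elim0⟩
  | succ m ih =>
    intro μ hμ
    -- the embedding of E^m into E^(m+1)
    set emb : (Fin m → E) → (Fin (m+1) → E) := fun c => Fin.snoc c 0 with hemb
    have hsnoc_smul : ∀ (a : E) (c : Fin m → E), emb (a • c) = a • emb c := by
      intro a c
      funext i
      refine Fin.lastCases ?_ (fun j => ?_) i
      · simp [hemb]
      · simp [hemb]
    have hsnoc_add : ∀ (c d : Fin m → E), emb (c + d) = emb c + emb d := by
      intro c d
      funext i
      refine Fin.lastCases ?_ (fun j => ?_) i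
      · simp [hemb]
      · simp [hemb]
    have hsnoc_sub : ∀ (c d : Fin m → E), emb (c - d) = emb c - emb d := by
      intro c d
      funext i
      refine Fin.lastCases ?_ (fun j => ?_) i
      · simp [hemb]
      · simp [hemb]
    set μW : (Fin m → E) → ℝ := fun c => μ (emb c) with hμWdef
    have hμW : D.IsNorm μW := by
      refine ⟨fun a x => ?_, fun x y => ?_, fun x hx => ?_⟩
      · rw [hμWdef]; dsimp only; rw [hsnoc_smul a x]; exact hμ.1 _ _
      · rw [hμWdef]; dsimp only; rw [hsnoc_add]; exact hμ.2.1 _ _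
      · refine hμ.2.2 _ fun h0 => hx ?_
        · funext j
          have := congrFun h0 (Fin.castSucc j)
          simpa [hemb] using this
    obtain ⟨CW, hCWpos, hCW⟩ := ih μW hμW
    obtain ⟨B, hBpos, hBle⟩ := norm_le_coords D hμW
    set el : Fin (m+1) → E := Pi.single (Fin.last m) 1 with hel
    have hdec : ∀ z : Fin (m+1) → E,
        z = z (Fin.last m) • el + emb (fun j => z j.castSucc) := by
      intro z
      funext i
      refine Fin.lastCases ?_ (fun j => ?_) i
      · simp [hel, hemb]
      · have hne : Fin.castSucc j ≠ Fin.last m := Fin.ne_of_lt (Fin.castSucc_lt_last j)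
        simp [hel, hemb, Pi.single_eq_of_ne hne]
    by_cases hδ : ∃ δ : ℝ, 0 < δ ∧ ∀ w : Fin m → E, δ ≤ μ (el + emb w)
    · obtain ⟨δ, hδpos, hδb⟩ := hδ
      set K : ℝ := max 1 (δ⁻¹ * μ el) with hK
      refine ⟨max δ⁻¹ (CW * K), ?_, fun z j => ?_⟩
      · exact lt_max_of_lt_left (by positivity)
      have hμz : 0 ≤ μ z := norm_nonneg D hμ z
      have hva : D.v (z (Fin.last m)) ≤ δ⁻¹ * μ z := by
        set a := z (Fin.last m) with haa
        rcases eq_or_ne a 0 with h0 | h0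
        · rw [h0, D.v_zero]; positivity
        · have hzz : z = a • (el + emb (a⁻¹ • (fun j => z j.castSucc))) := by
            rw [smul_add, ← hsnoc_smul, smul_smul, mul_inv_cancel₀ h0, one_smul]
            exact hdec z
          have : μ z = D.v a * μ (el + emb (a⁻¹ • fun j => z j.castSucc)) := by
            conv_lhs => rw [hzz]
            exact hμ.1 _ _
          have h2 : D.v a * δ ≤ μ z := by
            rw [this]
            exact mul_le_mul_of_nonneg_left (hδb _) (v_nonneg D a)
          have h3 := mul_le_mul_of_nonneg_left h2 (inv_nonneg.2 hδpos.le)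
          rw [show δ⁻¹ * (D.v a * δ) = D.v a * (δ⁻¹ * δ) by ring,
            inv_mul_cancel₀ hδpos.ne', mul_one] at h3
          exact h3
      have hcoords : ∀ j : Fin m, D.v (z j.castSucc) ≤ CW * K * μ z := by
        intro j
        have h1 : μW (fun j => z j.castSucc) ≤ K * μ z := by
          have he : emb (fun j => z j.castSucc) = z - z (Fin.last m) • el := by
            funext i
            refine Fin.lastCases ?_ (fun j2 => ?_) i
            · simp [hemb, hel]
            · have hne : Fin.castSucc j2 ≠ Fin.last m := Fin.ne_of_lt (Fin.castSucc_lt_last j2)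
              simp [hemb, hel, Pi.single_eq_of_ne hne]
          rw [hμWdef]; dsimp only
          rw [he]
          refine le_trans (norm_sub_le D hμ _ _) (max_le ?_ ?_)
          · calc μ z = 1 * μ z := (one_mul _).symm
              _ ≤ K * μ z := mul_le_mul_of_nonneg_right (le_max_left _ _) hμz
          · rw [hμ.1]
            calc D.v (z (Fin.last m)) * μ el ≤ (δ⁻¹ * μ z) * μ el :=
                  mul_le_mul_of_nonneg_right hva (norm_nonneg D hμ el)
              _ = (δ⁻¹ * μ el) * μ z := by ring
              _ ≤ K * μ z := mul_le_mul_of_nonneg_right (le_max_right _ _) hμz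
        calc D.v (z j.castSucc) ≤ CW * μW (fun j => z j.castSucc) :=
              hCW (fun j => z j.castSucc) j
          _ ≤ CW * (K * μ z) := mul_le_mul_of_nonneg_left h1 hCWpos.le
          _ = CW * K * μ z := by ring
      refine Fin.lastCases ?_ (fun j2 => ?_) j
      · calc D.v (z (Fin.last m)) ≤ δ⁻¹ * μ z := hva
          _ ≤ max δ⁻¹ (CW * K) * μ z :=
            mul_le_mul_of_nonneg_right (le_max_left _ _) hμz
      · calc D.v (z j2.castSucc) ≤ CW * K * μ z := hcoords j2
          _ ≤ max δ⁻¹ (CW * K) * μ z :=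
            mul_le_mul_of_nonneg_right (le_max_right _ _) hμz
    · -- impossible case: build a Cauchy sequence converging to a zero of μ
      exfalso
      push_neg at hδ
      have hseq : ∀ k : ℕ, ∃ w : Fin m → E, μ (el + emb w) < 1/(k+1) := by
        intro k
        obtain ⟨w, hw⟩ := hδ (1/(k+1)) (by positivity)
        exact ⟨w, hw⟩
      choose wseq hws using hseq
      have hcauchy : ∀ j : Fin m, ∀ ε : ℝ, 0 < ε →
          ∃ N : ℕ, ∀ k ≥ N, ∀ l ≥ N, D.v (wseq k j - wseq l j) < ε := by
        intro j ε hε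
        obtain ⟨N, hN⟩ := exists_nat_gt (CW / ε)
        refine ⟨N, fun k hk l hl => ?_⟩
        have hsub : D.v (wseq k j - wseq l j) ≤ CW * μW (wseq k - wseq l) := by
          have := hCW (wseq k - wseq l) j
          simpa using this
        have hμWsub : μW (wseq k - wseq l) ≤ 1/(N+1) := by
          rw [hμWdef]; dsimp only
          rw [hsnoc_sub]
          have he : emb (wseq k) - emb (wseq l)
              = (el + emb (wseq k)) - (el + emb (wseq l)) := by abel
          rw [he]
          refine le_trans (norm_sub_le D hμ _ _) (max_le ?_ ?_)
          · refine le_trans (hws k).le ?_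
            apply one_div_le_one_div_of_le (by positivity)
            have : (N:ℝ) ≤ k := Nat.cast_le.mpr hk
            linarith
          · refine le_trans (hws l).le ?_
            apply one_div_le_one_div_of_le (by positivity)
            have : (N:ℝ) ≤ l := Nat.cast_le.mpr hl
            linarith
        have hNp : (0:ℝ) < (N:ℝ) + 1 := by positivity
        calc D.v (wseq k j - wseq l j) ≤ CW * μW (wseq k - wseq l) := hsub
          _ ≤ CW * (1/(N+1)) := mul_le_mul_of_nonneg_left hμWsub hCWpos.le
          _ < ε := by
              have h1 : CW < (N:ℝ) * ε := by
                rw [div_lt_iff₀ hε] at hN; exact hN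
              rw [mul_one_div, div_lt_iff₀ hNp]
              nlinarith [hε]
      choose lim hlim using fun j => D.complete (fun k => wseq k j) (hcauchy j)
      have hconv : ∀ ε : ℝ, 0 < ε → ∃ N : ℕ, ∀ k ≥ N, ∀ j : Fin m,
          D.v (wseq k j - lim j) < ε := by
        intro ε hε
        choose g hg using fun j => hlim j ε hε
        refine ⟨Finset.univ.sup g, fun k hk j => ?_⟩
        exact hg j k (le_trans (Finset.le_sup (Finset.mem_univ j)) hk)
      have hzero : ∀ ε : ℝ, 0 < ε → μ (el + emb lim) ≤ ε := by
        intro ε hε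
        obtain ⟨N1, hN1⟩ := hconv (ε / B) (by positivity)
        obtain ⟨N2, hN2⟩ := exists_nat_gt (1/ε)
        set k := max N1 N2 with hk
        have hk1 : N1 ≤ k := le_max_left _ _
        have hk2 : N2 ≤ k := le_max_right _ _
        have hsplit : el + emb lim = (el + emb (wseq k)) + emb (lim - wseq k) := by
          rw [hsnoc_sub]; abel
        rw [hsplit]
        refine le_trans (hμ.2.1 _ _) (max_le ?_ ?_)
        · refine le_trans (hws k).le ?_
          have hN2k : (N2:ℝ) ≤ (k:ℝ) := Nat.cast_le.mpr hk2
          have h1 : 1/ε < (N2:ℝ) := hN2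
          rw [div_le_iff₀ (by positivity : (0:ℝ) < (k:ℝ)+1)]
          rw [div_lt_iff₀ hε] at h1
          have h2 : ε * (N2:ℝ) ≤ ε * (k:ℝ) := mul_le_mul_of_nonneg_left hN2k hε.le
          nlinarith [hε]
        · have : μW (lim - wseq k) ≤ B * (ε / B) := by
            apply hBle _ (by positivity)
            intro j
            have := hN1 k hk1 j
            have hrw : (lim - wseq k) j = -(wseq k j - lim j) := by
              rw [Pi.sub_apply]; ring
            rw [hrw, v_neg]
            exact this.le
          rw [hμWdef] at this; dsimp only at this
          refine le_trans this ?_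
          rw [mul_div_cancel₀ _ hBpos.ne']
      have hne : el + emb lim ≠ 0 := by
        intro h0
        have := congrFun h0 (Fin.last m)
        simp [hel, hemb] at this
      have hpos := hμ.2.2 _ hne
      have := hzero (μ (el + emb lim) / 2) (by linarith)
      linarith

end CoordBound

section Order

variable {n : ℕ} (D : NonarchCDVF E q) (S : Set ((Fin n → E) → ℝ))

/-- the common preorder induced by all norms in `S` -/
def leS (x y : Fin n → E) : Prop := ∀ μ ∈ S, μ x ≤ μ y

/-- the closed ball: all `x` with `μ x ≤ μ y` for all `μ ∈ S` -/
def ballS (y : Fin n → E) : Set (Fin n → E) := {x | leS S x y}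

variable {S}

lemma leS_refl (x : Fin n → E) : leS S x x := fun _ _ => le_rfl

lemma leS_trans {x y z : Fin n → E} (h1 : leS S x y) (h2 : leS S y z) :
    leS S x z := fun μ hμ => le_trans (h1 μ hμ) (h2 μ hμ)

variable (hSnorm : ∀ μ ∈ S, D.IsNorm μ)
include hSnorm

lemma leS_smul_of_v_le {a b : E} (hab : D.v a ≤ D.v b) {x y : Fin n → E}
    (h : leS S x y) : leS S (a • x) (b • y) := by
  intro μ hμ
  rw [(hSnorm μ hμ).1, (hSnorm μ hμ).1]
  exact mul_le_mul hab (h μ hμ) (norm_nonneg D (hSnorm μ hμ) x) (v_nonneg D b)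

lemma leS_smul {a : E} {x y : Fin n → E} (h : leS S x y) :
    leS S (a • x) (a • y) := leS_smul_of_v_le D hSnorm le_rfl h

lemma leS_smul_cancel {a : E} (ha : a ≠ 0) {x y : Fin n → E}
    (h : leS S (a • x) (a • y)) : leS S x y := by
  have := leS_smul D hSnorm (a := a⁻¹) h
  rwa [smul_smul, smul_smul, inv_mul_cancel₀ ha, one_smul, one_smul] at this

lemma leS_zero (y : Fin n → E) : leS S 0 y := by
  intro μ hμ
  rw [norm_zero D (hSnorm μ hμ)]
  exact norm_nonneg D (hSnorm μ hμ) y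

lemma ballS_zero_mem (y : Fin n → E) : (0 : Fin n → E) ∈ ballS S y :=
  leS_zero D hSnorm y

lemma ballS_add_mem {y x x' : Fin n → E} (hx : x ∈ ballS S y) (hx' : x' ∈ ballS S y) :
    x + x' ∈ ballS S y := by
  intro μ hμ
  exact le_trans ((hSnorm μ hμ).2.1 x x') (max_le (hx μ hμ) (hx' μ hμ))

lemma ballS_neg_mem {y x : Fin n → E} (hx : x ∈ ballS S y) : -x ∈ ballS S y := by
  intro μ hμ
  rw [norm_neg D (hSnorm μ hμ)]
  exact hx μ hμ

lemma ballS_smul_mem {y x : Fin n → E} {a : E} (ha : D.v a ≤ 1) (hx : x ∈ ballS S y) :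
    a • x ∈ ballS S y := by
  intro μ hμ
  rw [(hSnorm μ hμ).1]
  calc D.v a * μ x ≤ 1 * μ x :=
        mul_le_mul_of_nonneg_right ha (norm_nonneg D (hSnorm μ hμ) x)
    _ = μ x := one_mul _
    _ ≤ μ y := hx μ hμ

lemma ballS_sub_mem {y x x' : Fin n → E} (hx : x ∈ ballS S y) (hx' : x' ∈ ballS S y) :
    x - x' ∈ ballS S y := by
  rw [sub_eq_add_neg]
  exact ballS_add_mem D hSnorm hx (ballS_neg_mem D hSnorm hx')

variable (hcomp : ∀ x y : Fin n → E, x ≠ 0 → y ≠ 0 →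
      (∀ μ ∈ S, μ y ≤ μ x) ∨ (∀ μ ∈ S, μ x ≤ μ y))
include hcomp

omit hSnorm in
lemma leS_total {x y : Fin n → E} (hx : x ≠ 0) (hy : y ≠ 0) :
    leS S x y ∨ leS S y x := (hcomp x y hx hy).symm

variable {μ0 : (Fin n → E) → ℝ} (hμ0 : μ0 ∈ S)
include hμ0

lemma exists_nat_leS {x y : Fin n → E} (hx : x ≠ 0) (hy : y ≠ 0) :
    ∃ k : ℕ, leS S ((unif D ^ k) • x) y := by
  by_contra hc
  push_neg at hc
  have h2 : ∀ k : ℕ, leS S y ((unif D ^ k) • x) := by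
    intro k
    rcases leS_total hcomp (x := (unif D ^ k) • x) (y := y)
      (smul_ne_zero (pow_ne_zero k (unif_ne_zero D)) hx) hy with h | h
    · exact absurd h (hc k)
    · exact h
  have hx0 : 0 < μ0 x := (hSnorm μ0 hμ0).2.2 x hx
  have hy0 : 0 < μ0 y := (hSnorm μ0 hμ0).2.2 y hy
  obtain ⟨k, hk⟩ := pow_unbounded_of_one_lt (μ0 x / μ0 y) (one_lt_qR D)
  have h3 := h2 k μ0 hμ0
  rw [(hSnorm μ0 hμ0).1, v_unif_pow] at h3
  have hqk : (q:ℝ) ^ (-(k:ℤ)) = ((q:ℝ)^k)⁻¹ := by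
    rw [zpow_neg, zpow_natCast]
  rw [hqk] at h3
  have hqkpos : (0:ℝ) < (q:ℝ)^k := by have := q_pos D; positivity
  rw [div_lt_iff₀ hy0] at hk
  have := mul_lt_mul_of_pos_left hk (inv_pos.2 hqkpos)
  rw [show ((q:ℝ)^k)⁻¹ * ((q:ℝ)^k * μ0 y) = μ0 y by field_simp] at this
  linarith

lemma exists_least_exp {x y : Fin n → E} (hx : x ≠ 0) (hy : y ≠ 0) :
    ∃ k : ℤ, leS S ((unif D ^ k) • x) y ∧ ¬ leS S ((unif D ^ (k-1)) • x) y := by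
  classical
  set P : ℤ → Prop := fun k => leS S ((unif D ^ k) • x) y with hP
  have hinh : ∃ k, P k := by
    obtain ⟨k, hk⟩ := exists_nat_leS D hSnorm hcomp hμ0 hx hy
    refine ⟨(k:ℤ), ?_⟩
    rw [hP]
    simpa [zpow_natCast] using hk
  have hbdd : ∃ b : ℤ, ∀ k : ℤ, P k → b ≤ k := by
    have hx0 : 0 < μ0 x := (hSnorm μ0 hμ0).2.2 x hx
    have hy0 : 0 < μ0 y := (hSnorm μ0 hμ0).2.2 y hy
    obtain ⟨k1, hk1⟩ := pow_unbounded_of_one_lt (μ0 y / μ0 x) (one_lt_qR D)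
    refine ⟨-(k1:ℤ), fun k hk => ?_⟩
    by_contra hcon
    push_neg at hcon
    have h3 := hk μ0 hμ0
    rw [(hSnorm μ0 hμ0).1, v_unif_zpow] at h3
    -- q^(-k) * μ0 x ≤ μ0 y < q^k1 * μ0 x, but -k > k1 so q^(-k) ≥ q^(k1+1) > q^k1
    rw [div_lt_iff₀ hx0] at hk1
    have hklt : (k1:ℤ) < -k := by omega
    have hmono : (q:ℝ) ^ ((k1:ℤ)) ≤ (q:ℝ) ^ (-k) :=
      zpow_le_zpow_right₀ (one_lt_qR D).le hklt.le
    rw [show (q:ℝ)^((k1:ℤ)) = (q:ℝ)^k1 by rw [zpow_natCast]] at hmono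
    nlinarith [hx0]
  obtain ⟨lb, hlb, hmin⟩ := Int.exists_least_of_bdd hbdd hinh
  refine ⟨lb, hlb, fun hcon => ?_⟩
  have := hmin _ hcon
  omega

omit hcomp hμ0 in
lemma small_in_ball {w : Fin n → E} {mj : Fin n → ℕ}
    (hm : ∀ j, leS S ((unif D ^ (mj j)) • (Pi.single j 1 : Fin n → E)) w) {M : ℕ}
    (hM : ∀ j, mj j ≤ M) :
    ∀ z : Fin n → E, (∀ j, D.v (z j) ≤ (q:ℝ)^(-(M:ℤ))) → z ∈ ballS S w := by
  intro z hz μ hμ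
  have hμw : 0 ≤ μ w := norm_nonneg D (hSnorm μ hμ) w
  calc μ z = μ (∑ j, z j • (Pi.single j 1 : Fin n → E)) := by rw [← vec_decomp]
    _ ≤ μ w := by
        apply norm_sum_le D (hSnorm μ hμ) hμw
        intro j _
        rw [(hSnorm μ hμ).1]
        have h1 : D.v (z j) ≤ (q:ℝ)^(-(mj j : ℤ)) := by
          refine le_trans (hz j) (zpow_le_zpow_right₀ (one_lt_qR D).le ?_)
          have := hM j
          omega
        have h2 := hm j μ hμ
        rw [(hSnorm μ hμ).1, v_unif_pow] at h2
        calc D.v (z j) * μ (Pi.single j 1)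
            ≤ (q:ℝ)^(-(mj j:ℤ)) * μ (Pi.single j 1) :=
              mul_le_mul_of_nonneg_right h1 (norm_nonneg D (hSnorm μ hμ) _)
          _ ≤ μ w := h2

end Order

section Window

variable {n : ℕ} (D : NonarchCDVF E q) (S : Set ((Fin n → E) → ℝ))

/-- the elements lying strictly between `π • y0` (exclusive) and `y0` (inclusive) -/
def windowS (y0 : Fin n → E) : Set (Fin n → E) :=
  {x | x ≠ 0 ∧ leS S x y0 ∧ ¬ leS S x (unif D • y0)}

variable {S}
variable (hSnorm : ∀ μ ∈ S, D.IsNorm μ)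
  (hcomp : ∀ x y : Fin n → E, x ≠ 0 → y ≠ 0 →
      (∀ μ ∈ S, μ y ≤ μ x) ∨ (∀ μ ∈ S, μ x ≤ μ y))
  {μ0 : (Fin n → E) → ℝ} (hμ0 : μ0 ∈ S)
include hSnorm hcomp hμ0

lemma exists_reps {y0 : Fin n → E} (hy0 : y0 ≠ 0) :
    ∃ (r : ℕ) (y : Fin (r+1) → (Fin n → E)),
      (∀ i, y i ∈ windowS D S y0) ∧
      (∀ i j : Fin (r+1), i ≤ j → leS S (y j) (y i)) ∧
      (∀ i j : Fin (r+1), i < j → ¬ leS S (y i) (y j)) ∧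
      (∀ x ∈ windowS D S y0, ∃ i, leS S x (y i) ∧ leS S (y i) x) := by
  classical
  have hπ : unif D ≠ 0 := unif_ne_zero D
  have hπy0 : unif D • y0 ≠ 0 := smul_ne_zero hπ hy0
  have hwin_le : ∀ x ∈ windowS D S y0, leS S (unif D • y0) x := by
    intro x hx
    rcases leS_total hcomp hπy0 hx.1 with h | h
    · exact h
    · exact absurd h hx.2.2
  obtain ⟨C0, hC0pos, hC0⟩ := coord_bound D n μ0 (hSnorm μ0 hμ0)
  have hμ0y0pos : 0 < μ0 y0 := (hSnorm μ0 hμ0).2.2 y0 hy0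
  obtain ⟨N, hN⟩ := pow_unbounded_of_one_lt (C0 * μ0 y0) (one_lt_qR D)
  have hNb : ∀ x ∈ windowS D S y0, ∀ j, D.v (x j) ≤ (q:ℝ)^(N:ℤ) := by
    intro x hx j
    calc D.v (x j) ≤ C0 * μ0 x := hC0 x j
      _ ≤ C0 * μ0 y0 := mul_le_mul_of_nonneg_left (hx.2.1 μ0 hμ0) hC0pos.le
      _ ≤ (q:ℝ)^(N:ℤ) := by rw [zpow_natCast]; exact hN.le
  have hsingle_ne : ∀ j : Fin n, (Pi.single j 1 : Fin n → E) ≠ 0 := by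
    intro j hcon
    have : (Pi.single j 1 : Fin n → E) j = 0 := by rw [hcon]; rfl
    rw [Pi.single_eq_same] at this
    exact one_ne_zero this
  have hmj : ∀ j : Fin n, ∃ m : ℕ,
      leS S ((unif D ^ m) • (Pi.single j 1 : Fin n → E)) (unif D • y0) :=
    fun j => exists_nat_leS D hSnorm hcomp hμ0 (hsingle_ne j) hπy0
  choose mj hmjs using hmj
  set M := Finset.univ.sup mj with hM
  have hsmall : ∀ z : Fin n → E, (∀ j, D.v (z j) ≤ (q:ℝ)^(-(M:ℤ))) →
      z ∈ ballS S (unif D • y0) :=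
    small_in_ball D hSnorm hmjs (fun j => Finset.le_sup (Finset.mem_univ j))
  obtain ⟨F, hF⟩ := cover_vec D n N M
  set Φ : (Fin n → E) → Finset (Fin n → E) :=
    fun x => F.filter (fun f => leS S f x) with hΦdef
  have hΦ_eq : ∀ {x x' : Fin n → E}, leS S x x' → leS S x' x → Φ x = Φ x' := by
    intro x x' h1 h2
    apply Finset.ext
    intro f
    simp only [hΦdef, Finset.mem_filter]
    exact ⟨fun h => ⟨h.1, leS_trans h.2 h1⟩, fun h => ⟨h.1, leS_trans h.2 h2⟩⟩
  have hEquiv_of_Φ : ∀ x ∈ windowS D S y0, ∀ x' ∈ windowS D S y0,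
      Φ x = Φ x' → leS S x x' := by
    intro x hx x' hx' hΦeq
    obtain ⟨f, hfF, hfc⟩ := hF x (hNb x hx)
    have hxf : (x - f) ∈ ballS S (unif D • y0) := hsmall _ hfc
    have hfx : leS S f x := by
      intro μ hμ
      calc μ f = μ (x - (x - f)) := by rw [sub_sub_cancel]
        _ ≤ max (μ x) (μ (x - f)) := norm_sub_le D (hSnorm μ hμ) _ _
        _ ≤ μ x := max_le le_rfl (le_trans (hxf μ hμ) (hwin_le x hx μ hμ))
    have hfΦ : f ∈ Φ x := by
      simp only [hΦdef, Finset.mem_filter]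
      exact ⟨hfF, hfx⟩
    rw [hΦeq] at hfΦ
    simp only [hΦdef, Finset.mem_filter] at hfΦ
    intro μ hμ
    calc μ x = μ (f + (x - f)) := by rw [show f + (x - f) = x by abel]
      _ ≤ max (μ f) (μ (x - f)) := (hSnorm μ hμ).2.1 _ _
      _ ≤ μ x' := max_le (hfΦ.2 μ hμ)
          (le_trans (hxf μ hμ) (hwin_le x' hx' μ hμ))
  have hQfin : (Φ '' windowS D S y0).Finite := by
    refine Set.Finite.subset F.powerset.finite_toSet ?_
    rintro t ⟨x, _, rfl⟩
    simp only [Finset.mem_coe, Finset.mem_powerset, hΦdef]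
    exact Finset.filter_subset _ _
  set rep : Finset (Fin n → E) → (Fin n → E) :=
    fun t => if h : ∃ x, x ∈ windowS D S y0 ∧ Φ x = t then h.choose else y0 with hrepdef
  have hrep : ∀ t ∈ Φ '' windowS D S y0, rep t ∈ windowS D S y0 ∧ Φ (rep t) = t := by
    intro t ht
    obtain ⟨x, hx, rfl⟩ := ht
    have h : ∃ x', x' ∈ windowS D S y0 ∧ Φ x' = Φ x := ⟨x, hx, rfl⟩
    simp only [hrepdef, dif_pos h]
    exact h.choose_spec
  set rset : Finset (Fin n → E) := hQfin.toFinset.image rep with hrsetdef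
  have hrset : ∀ z ∈ rset, z ∈ windowS D S y0 ∧ rep (Φ z) = z := by
    intro z hz
    obtain ⟨t, ht, rfl⟩ := Finset.mem_image.1 hz
    have ht' : t ∈ Φ '' windowS D S y0 := (Set.Finite.mem_toFinset _).1 ht
    obtain ⟨hw, hΦt⟩ := hrep t ht'
    exact ⟨hw, by rw [hΦt]⟩
  have hcover : ∀ x ∈ windowS D S y0, ∃ z ∈ rset, leS S x z ∧ leS S z x := by
    intro x hx
    have ht : Φ x ∈ Φ '' windowS D S y0 := ⟨x, hx, rfl⟩
    obtain ⟨hw, hΦt⟩ := hrep (Φ x) ht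
    refine ⟨rep (Φ x),
      Finset.mem_image.2 ⟨Φ x, (Set.Finite.mem_toFinset _).2 ht, rfl⟩,
      hEquiv_of_Φ x hx _ hw hΦt.symm, hEquiv_of_Φ _ hw x hx hΦt⟩
  have hinj : ∀ z ∈ rset, ∀ z' ∈ rset, leS S z z' → leS S z' z → z = z' := by
    intro z hz z' hz' h1 h2
    have h3 := hΦ_eq h1 h2
    rw [← (hrset z hz).2, ← (hrset z' hz').2, h3]
  have hy0w : y0 ∈ windowS D S y0 := by
    refine ⟨hy0, leS_refl y0, fun hcon => ?_⟩
    have h := hcon μ0 hμ0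
    rw [(hSnorm μ0 hμ0).1, v_unif] at h
    have hqi : (q:ℝ) * (q:ℝ)⁻¹ = 1 := mul_inv_cancel₀ (q_pos D).ne'
    nlinarith [one_lt_qR D, hμ0y0pos]
  have hne : rset.Nonempty := by
    obtain ⟨z, hzr, _, _⟩ := hcover y0 hy0w
    exact ⟨z, hzr⟩
  set r : ℕ := rset.card - 1 with hr
  have hcard : rset.card = r + 1 := by
    have := Finset.card_pos.2 hne
    omega
  letI : LinearOrder {z // z ∈ rset} :=
    { le := fun a b => leS S b.1 a.1
      le_refl := fun a => leS_refl _
      le_trans := fun a b c h1 h2 => leS_trans h2 h1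
      le_antisymm := fun a b h1 h2 => Subtype.ext (hinj _ a.2 _ b.2 h2 h1)
      le_total := fun a b =>
        leS_total hcomp (hrset _ b.2).1.1 (hrset _ a.2).1.1
      toDecidableLE := Classical.decRel _ }
  have hcardF : Fintype.card {z // z ∈ rset} = r + 1 := by
    rw [Fintype.card_coe]; exact hcard
  set e := monoEquivOfFin _ hcardF with he
  refine ⟨r, fun i => (e i).1, fun i => (hrset _ (e i).2).1, ?_, ?_, ?_⟩
  · intro i j hij
    exact e.monotone hij
  · intro i j hij
    have h := e.strictMono hij
    rw [lt_iff_le_not_ge] at h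
    exact fun hcon => h.2 hcon
  · intro x hx
    obtain ⟨z, hz, h1, h2⟩ := hcover x hx
    refine ⟨e.symm ⟨z, hz⟩, ?_, ?_⟩
    · simpa using h1
    · simpa using h2

lemma exists_window {y0 : Fin n → E} (hy0 : y0 ≠ 0) {x : Fin n → E} (hx : x ≠ 0) :
    ∃ k : ℤ, (unif D ^ k) • x ∈ windowS D S y0 := by
  have hπ : unif D ≠ 0 := unif_ne_zero D
  obtain ⟨k, hk, hk'⟩ := exists_least_exp D hSnorm hcomp hμ0 hx hy0
  refine ⟨k, smul_ne_zero (zpow_ne_zero k hπ) hx, hk, fun hcon => hk' ?_⟩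
  apply leS_smul_cancel D hSnorm hπ (a := unif D)
  have key : (unif D) • ((unif D ^ (k-1)) • x) = (unif D ^ k) • x := by
    rw [smul_smul, mul_comm, ← zpow_add_one₀ hπ, sub_add_cancel]
  rw [key]
  exact hcon

end Window

section Lattice

variable {n : ℕ} (D : NonarchCDVF E q)

lemma latticeOf_zero (B : Finset (Fin n → E)) : (0 : Fin n → E) ∈ D.latticeOf B := by
  refine ⟨fun _ => 0, fun b => by rw [D.v_zero]; norm_num, ?_⟩
  simp

lemma latticeOf_base {B : Finset (Fin n → E)} {b : Fin n → E} (hb : b ∈ B) :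
    b ∈ D.latticeOf B := by
  classical
  refine ⟨fun b' => if b' = b then 1 else 0, fun b' => ?_, ?_⟩
  · show D.v (if b' = b then (1:E) else 0) ≤ 1
    split_ifs
    · rw [v_one]
    · rw [D.v_zero]; norm_num
  · show b = ∑ b' ∈ B, (if b' = b then (1:E) else 0) • b'
    have : ∀ b' ∈ B, (if b' = b then (1:E) else 0) • b' = if b' = b then b' else 0 := by
      intro b' _
      split_ifs with h
      · rw [one_smul]
      · rw [zero_smul]
    rw [Finset.sum_congr rfl this, Finset.sum_ite_eq' B b (fun b' => b'), if_pos hb]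

lemma latticeOf_add {B : Finset (Fin n → E)} {x x' : Fin n → E}
    (hx : x ∈ D.latticeOf B) (hx' : x' ∈ D.latticeOf B) : x + x' ∈ D.latticeOf B := by
  obtain ⟨c, hc, rfl⟩ := hx
  obtain ⟨c', hc', rfl⟩ := hx'
  refine ⟨c + c', fun b => ?_, ?_⟩
  · refine le_trans (D.v_add (c b) (c' b)) (max_le (hc b) (hc' b))
  · rw [← Finset.sum_add_distrib]
    apply Finset.sum_congr rfl
    intro b _
    rw [Pi.add_apply, add_smul]

lemma latticeOf_smul {B : Finset (Fin n → E)} {x : Fin n → E} {a : E}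
    (ha : D.v a ≤ 1) (hx : x ∈ D.latticeOf B) : a • x ∈ D.latticeOf B := by
  obtain ⟨c, hc, rfl⟩ := hx
  refine ⟨fun b => a * c b, fun b => ?_, ?_⟩
  · rw [D.v_mul]
    exact mul_le_one₀ ha (v_nonneg D _) (hc b)
  · rw [Finset.smul_sum]
    apply Finset.sum_congr rfl
    intro b _
    rw [smul_smul]

lemma latticeOf_sum {B : Finset (Fin n → E)} {ι : Type*} (s : Finset ι)
    (g : ι → Fin n → E) (hg : ∀ i ∈ s, g i ∈ D.latticeOf B) :
    (∑ i ∈ s, g i) ∈ D.latticeOf B := by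
  classical
  induction s using Finset.induction_on with
  | empty => simpa using latticeOf_zero D B
  | insert _ _ hns ih =>
    rename_i i s'
    rw [Finset.sum_insert hns]
    exact latticeOf_add D (hg i (Finset.mem_insert_self i s'))
      (ih fun i' hi' => hg i' (Finset.mem_insert_of_mem hi'))

lemma vec_decomp' (M : ℕ) (w : Fin n → E) :
    w = ∑ j, (w j * (unif D ^ M)⁻¹) • ((unif D ^ M) • (Pi.single j 1 : Fin n → E)) := by
  have hu : unif D ^ M ≠ 0 := pow_ne_zero _ (unif_ne_zero D)
  calc w = ∑ j, w j • (Pi.single j 1 : Fin n → E) := vec_decomp w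
    _ = _ := by
        apply Finset.sum_congr rfl
        intro j _
        rw [smul_smul, mul_assoc, inv_mul_cancel₀ hu, mul_one]

lemma isLattice_sandwich {L : Set (Fin n → E)}
    (h0 : (0 : Fin n → E) ∈ L)
    (hadd : ∀ x ∈ L, ∀ x' ∈ L, x + x' ∈ L)
    (hneg : ∀ x ∈ L, -x ∈ L)
    (hsmul : ∀ a : E, D.v a ≤ 1 → ∀ x ∈ L, a • x ∈ L)
    {N M : ℕ} (hub : ∀ x ∈ L, ∀ j, D.v (x j) ≤ (q:ℝ)^(N:ℤ))
    (hlb : ∀ z : Fin n → E, (∀ j, D.v (z j) ≤ (q:ℝ)^(-(M:ℤ))) → z ∈ L) :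
    D.IsLattice L := by
  classical
  obtain ⟨F, hF⟩ := cover_vec D n N M
  have hu : unif D ^ M ≠ 0 := pow_ne_zero _ (unif_ne_zero D)
  set gens : Finset (Fin n → E) := (F.filter (· ∈ L)) ∪
    (Finset.univ.image (fun j : Fin n => (unif D ^ M) • (Pi.single j 1 : Fin n → E)))
    with hgens
  have hbasis_small : ∀ j : Fin n, ∀ j' : Fin n,
      D.v (((unif D ^ M) • (Pi.single j 1 : Fin n → E)) j') ≤ (q:ℝ)^(-(M:ℤ)) := by
    intro j j'
    rw [Pi.smul_apply, smul_eq_mul, D.v_mul]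
    rcases eq_or_ne j j' with rfl | h
    · rw [Pi.single_eq_same, v_one, mul_one, v_unif_pow]
    · rw [Pi.single_eq_of_ne (Ne.symm h), D.v_zero, mul_zero]
      positivity
  have hgensL : ∀ b ∈ gens, b ∈ L := by
    intro b hb
    rw [hgens, Finset.mem_union] at hb
    rcases hb with hb | hb
    · exact (Finset.mem_filter.1 hb).2
    · obtain ⟨j, _, rfl⟩ := Finset.mem_image.1 hb
      exact hlb _ (hbasis_small j)
  have hbasis_mem : ∀ j : Fin n, (unif D ^ M) • (Pi.single j 1 : Fin n → E) ∈ gens := by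
    intro j
    rw [hgens, Finset.mem_union]
    exact Or.inr (Finset.mem_image.2 ⟨j, Finset.mem_univ j, rfl⟩)
  refine ⟨gens, ?_, ?_⟩
  · apply Set.eq_of_subset_of_subset
    · -- L ⊆ latticeOf gens
      intro z hz
      obtain ⟨f, hfF, hfc⟩ := hF z (hub z hz)
      have hzf : z - f ∈ L := hlb _ hfc
      have hfL : f ∈ L := by
        have := hadd z hz _ (hneg _ hzf)
        rwa [show z + -(z - f) = f by abel] at this
      have hfgens : f ∈ gens := by
        rw [hgens, Finset.mem_union]
        exact Or.inl (Finset.mem_filter.2 ⟨hfF, hfL⟩)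
      have hrest : (z - f) ∈ D.latticeOf gens := by
        rw [vec_decomp' D M (z - f)]
        apply latticeOf_sum
        intro j _
        apply latticeOf_smul
        · rw [D.v_mul, v_inv D _ hu, v_unif_pow]
          have h1 : D.v ((z - f) j) ≤ (q:ℝ)^(-(M:ℤ)) := hfc j
          have h2 : ((q:ℝ)^(-(M:ℤ)))⁻¹ = (q:ℝ)^(M:ℤ) := by
            rw [← zpow_neg, neg_neg]
          rw [h2]
          calc D.v ((z - f) j) * (q:ℝ)^(M:ℤ) ≤ (q:ℝ)^(-(M:ℤ)) * (q:ℝ)^(M:ℤ) := by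
                apply mul_le_mul_of_nonneg_right h1
                have := q_pos D
                positivity
            _ = 1 := by
                rw [← zpow_add₀ (q_pos D).ne']
                simp
        · exact latticeOf_base D (hbasis_mem j)
      have := latticeOf_add D (latticeOf_base D hfgens) hrest
      rwa [show f + (z - f) = z by abel] at this
    · -- latticeOf gens ⊆ L
      rintro z ⟨c, hc, rfl⟩
      apply Finset.sum_induction _ (· ∈ L) (fun a b ha hb => hadd a ha b hb) h0
      intro b hb
      exact hsmul (c b) (hc b) b (hgensL b hb)
  · -- span = ⊤
    rw [eq_top_iff]
    intro z _
    rw [vec_decomp' D M z]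
    apply Submodule.sum_mem
    intro j _
    exact Submodule.smul_mem _ _ (Submodule.subset_span (hbasis_mem j))

lemma latticeNorm_zero' {L : Set (Fin n → E)} (h0 : (0:Fin n → E) ∈ L) :
    D.latticeNorm L 0 = 0 := by
  have hmem : (0:ℝ) ∈ {r : ℝ | ∃ a : E, D.v a = r ∧ ∃ y ∈ L, (0:Fin n → E) = a • y} :=
    ⟨0, D.v_zero, 0, h0, by rw [zero_smul]⟩
  apply le_antisymm
  · exact csInf_le ⟨0, fun r ⟨a, ha, _⟩ => ha ▸ v_nonneg D a⟩ hmem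
  · exact le_csInf ⟨0, hmem⟩ fun r ⟨a, ha, _⟩ => ha ▸ v_nonneg D a

end Lattice

section BallLattice

variable {n : ℕ} (D : NonarchCDVF E q)
variable {S : Set ((Fin n → E) → ℝ)}
variable (hSnorm : ∀ μ ∈ S, D.IsNorm μ)
include hSnorm

lemma maxIdealSmul_ballS_subset {ytop ybot : Fin n → E}
    (h : leS S (unif D • ytop) ybot) :
    D.maxIdealSmul (ballS S ytop) ⊆ ballS S ybot := by
  rintro z ⟨a, ha, u, hu, rfl⟩
  rcases eq_or_ne a 0 with rfl | ha0
  · rw [zero_smul]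
    exact ballS_zero_mem D hSnorm ybot
  · have hva : D.v a ≤ D.v (unif D) := by
      rw [v_unif]
      have := v_lt_exp D ha0 (k := 0) (by simpa using ha)
      simpa using this
    exact leS_trans (leS_smul_of_v_le D hSnorm hva hu) h

lemma latticeNorm_ballS {y x : Fin n → E} (hx : x ≠ 0) (k : ℤ)
    (h1 : leS S x ((unif D ^ k) • y)) (h2 : ¬ leS S x ((unif D ^ (k+1)) • y)) :
    D.latticeNorm (ballS S y) x = (q:ℝ) ^ (-k) := by
  have hπ : unif D ≠ 0 := unif_ne_zero D
  have hπk : unif D ^ k ≠ 0 := zpow_ne_zero k hπ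
  set T : Set ℝ := {r : ℝ | ∃ a : E, D.v a = r ∧ ∃ u ∈ ballS S y, x = a • u} with hT
  have hmem : (q:ℝ)^(-k) ∈ T := by
    refine ⟨unif D ^ k, v_unif_zpow D k, (unif D ^ k)⁻¹ • x, ?_, (smul_inv_smul₀ hπk x).symm⟩
    show leS S ((unif D ^ k)⁻¹ • x) y
    apply leS_smul_cancel D hSnorm hπk
    rwa [smul_inv_smul₀ hπk]
  have hlow : ∀ r ∈ T, (q:ℝ)^(-k) ≤ r := by
    rintro r ⟨a, rfl, u, hu, rfl⟩
    have ha0 : a ≠ 0 := by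
      rintro rfl
      rw [zero_smul] at hx
      exact hx rfl
    by_contra hcon
    push_neg at hcon
    have hva : D.v a ≤ (q:ℝ)^(-k-1) := v_lt_exp D ha0 hcon
    have hva' : D.v a ≤ D.v (unif D ^ (k+1)) := by
      rw [v_unif_zpow]
      rwa [show -(k+1) = -k-1 by ring]
    exact h2 (leS_smul_of_v_le D hSnorm hva' hu)
  apply le_antisymm
  · exact csInf_le ⟨0, fun r ⟨a, ha, _⟩ => ha ▸ v_nonneg D a⟩ hmem
  · exact le_csInf ⟨_, hmem⟩ hlow

variable (hcomp : ∀ x y : Fin n → E, x ≠ 0 → y ≠ 0 →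
      (∀ μ ∈ S, μ y ≤ μ x) ∨ (∀ μ ∈ S, μ x ≤ μ y))
  {μ0 : (Fin n → E) → ℝ} (hμ0 : μ0 ∈ S)
include hcomp hμ0

lemma isLattice_ballS {y : Fin n → E} (hy : y ≠ 0) :
    D.IsLattice (ballS S y) := by
  obtain ⟨C0, hC0pos, hC0⟩ := coord_bound D n μ0 (hSnorm μ0 hμ0)
  have hμ0ypos : 0 < μ0 y := (hSnorm μ0 hμ0).2.2 y hy
  obtain ⟨N, hN⟩ := pow_unbounded_of_one_lt (C0 * μ0 y) (one_lt_qR D)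
  have hsingle_ne : ∀ j : Fin n, (Pi.single j 1 : Fin n → E) ≠ 0 := by
    intro j hcon
    have : (Pi.single j 1 : Fin n → E) j = 0 := by rw [hcon]; rfl
    rw [Pi.single_eq_same] at this
    exact one_ne_zero this
  have hmj : ∀ j : Fin n, ∃ m : ℕ,
      leS S ((unif D ^ m) • (Pi.single j 1 : Fin n → E)) y :=
    fun j => exists_nat_leS D hSnorm hcomp hμ0 (hsingle_ne j) hy
  choose mj hmjs using hmj
  apply isLattice_sandwich D (ballS_zero_mem D hSnorm y)
    (fun x hx x' hx' => ballS_add_mem D hSnorm hx hx')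
    (fun x hx => ballS_neg_mem D hSnorm hx)
    (fun a ha x hx => ballS_smul_mem D hSnorm ha hx)
    (N := N) (M := Finset.univ.sup mj)
  · intro x hx j
    calc D.v (x j) ≤ C0 * μ0 x := hC0 x j
      _ ≤ C0 * μ0 y := mul_le_mul_of_nonneg_left (hx μ0 hμ0) hC0pos.le
      _ ≤ (q:ℝ)^(N:ℤ) := by rw [zpow_natCast]; exact hN.le
  · exact small_in_ball D hSnorm hmjs (fun j => Finset.le_sup (Finset.mem_univ j))

end BallLattice

end S4Aux

open S4Aux

/-- Let `S` be a nonempty set of norms on `E^n` such that for every pair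
`(x, y)` of nonzero elements of `E^n`, either `μ(x) ≥ μ(y)` for all `μ ∈ S`, or
`μ(x) ≤ μ(y)` for all `μ ∈ S`.  Then there is a chain of lattices
`L^0 ⊋ … ⊋ L^r ⊋ m_E·L^0` such that every `μ ∈ S` is a nonnegative linear combination of the
lattice norms `μ_{L^i}`. -/
theorem statement4 {E : Type*} [Field E] {q : ℕ} (D : NonarchCDVF E q) (n : ℕ) (hn : 1 ≤ n)
    (S : Set ((Fin n → E) → ℝ)) (hSne : S.Nonempty) (hSnorm : ∀ μ ∈ S, D.IsNorm μ)
    (hcomp : ∀ x y : Fin n → E, x ≠ 0 → y ≠ 0 →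
      (∀ μ ∈ S, μ y ≤ μ x) ∨ (∀ μ ∈ S, μ x ≤ μ y)) :
    ∃ (r : ℕ) (L : Fin (r + 1) → Set (Fin n → E)),
      (∀ i, D.IsLattice (L i)) ∧
      (∀ i : Fin r, L i.succ ⊂ L i.castSucc) ∧
      D.maxIdealSmul (L 0) ⊂ L (Fin.last r) ∧
      ∀ μ ∈ S, ∃ a : Fin (r + 1) → ℝ, (∀ i, 0 ≤ a i) ∧
        ∀ x : Fin n → E, μ x = ∑ i, a i * D.latticeNorm (L i) x := by
  classical
  obtain ⟨μ0, hμ0⟩ := hSne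
  have hπ : unif D ≠ 0 := unif_ne_zero D
  have hq1 : (1:ℝ) < q := one_lt_qR D
  have hq0 : (0:ℝ) < q := q_pos D
  set y0 : Fin n → E := Pi.single (⟨0, hn⟩ : Fin n) 1 with hy0def
  have hy0 : y0 ≠ 0 := by
    intro hcon
    have h1 : y0 ⟨0, hn⟩ = 0 := by rw [hcon]; rfl
    rw [hy0def, Pi.single_eq_same] at h1
    exact one_ne_zero h1
  obtain ⟨r, y, hywin, hmono, hstrict, hcov⟩ :=
    exists_reps D hSnorm hcomp hμ0 hy0
  have hyne : ∀ i, y i ≠ 0 := fun i => (hywin i).1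
  have hπy0 : unif D • y0 ≠ 0 := smul_ne_zero hπ hy0
  have hwin_le : ∀ i, leS S (unif D • y0) (y i) := by
    intro i
    rcases leS_total hcomp hπy0 (hyne i) with h | h
    · exact h
    · exact absurd h (hywin i).2.2
  set L : Fin (r+1) → Set (Fin n → E) := fun i => ballS S (y i) with hLdef
  refine ⟨r, L, fun i => isLattice_ballS D hSnorm hcomp hμ0 (hyne i), ?_, ?_, ?_⟩
  · -- the chain is strictly decreasing
    intro i
    have hlt : i.castSucc < i.succ := Fin.castSucc_lt_succ
    have h1 : leS S (y i.succ) (y i.castSucc) := hmono _ _ hlt.le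
    have h2 : ¬ leS S (y i.castSucc) (y i.succ) := hstrict _ _ hlt
    rw [Set.ssubset_def]
    constructor
    · intro x hx
      exact leS_trans hx h1
    · intro hcon
      exact h2 (hcon (leS_refl (y i.castSucc)))
  · -- m_E • L 0 ⊊ L r
    have hsub : D.maxIdealSmul (L 0) ⊆ L (Fin.last r) := by
      apply maxIdealSmul_ballS_subset D hSnorm
      exact leS_trans (leS_smul D hSnorm (hywin 0).2.1) (hwin_le (Fin.last r))
    rw [Set.ssubset_def]
    refine ⟨hsub, fun hcon => ?_⟩
    have hmem : y (Fin.last r) ∈ L (Fin.last r) := leS_refl _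
    obtain ⟨a, ha, u, hu, heq⟩ := hcon hmem
    have ha0 : a ≠ 0 := by
      rintro rfl
      rw [zero_smul] at heq
      exact (hyne (Fin.last r)) heq
    have hva : D.v a ≤ D.v (unif D) := by
      rw [v_unif]
      have := v_lt_exp D ha0 (k := 0) (by simpa using ha)
      simpa using this
    have h5 : leS S (y (Fin.last r)) (unif D • y0) := by
      rw [heq]
      exact leS_trans (leS_smul_of_v_le D hSnorm hva hu)
        (leS_smul D hSnorm (hywin 0).2.1)
    exact (hywin (Fin.last r)).2.2 h5
  · -- every norm in S is a nonnegative combination of the lattice norms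
    intro μ hμ
    have hqm1 : (0:ℝ) < (q:ℝ) - 1 := by linarith
    set c : ℕ → ℝ := fun t => μ (y (⟨min t r, by omega⟩ : Fin (r+1))) with hc
    set G : ℕ → ℝ := fun t => ((q:ℝ) * c r - c t) / ((q:ℝ) - 1) with hG
    set A : ℕ → ℝ := fun t => if t = 0 then G 0 else G t - G (t-1) with hA
    have hcmin : ∀ t (ht : t ≤ r), c t = μ (y ⟨t, by omega⟩) := by
      intro t ht
      rw [hc]
      dsimp only
      congr 2
      ext
      simp [min_eq_left ht]
    have hcr : c r = μ (y (Fin.last r)) := by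
      rw [hcmin r le_rfl]
      rfl
    have hc0 : c 0 = μ (y 0) := by
      rw [hcmin 0 (by omega)]
      congr 1
    -- c 0 ≤ q * c r
    have hqinv : (q:ℝ) * (q:ℝ)⁻¹ = 1 := mul_inv_cancel₀ hq0.ne'
    have hc0r : c 0 ≤ (q:ℝ) * c r := by
      have e1 : μ (unif D • y0) = (q:ℝ)⁻¹ * μ y0 := by
        rw [(hSnorm μ hμ).1, v_unif]
      have e2 : μ (y 0) ≤ μ y0 := (hywin 0).2.1 μ hμ
      have e3 : μ (unif D • y0) ≤ μ (y (Fin.last r)) := hwin_le (Fin.last r) μ hμ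
      rw [hc0, hcr]
      nlinarith [norm_nonneg D (hSnorm μ hμ) y0]
    -- antitonicity of c
    have hcmono : ∀ t, c (t+1) ≤ c t := by
      intro t
      by_cases ht : t + 1 ≤ r
      · have hle : (⟨t, by omega⟩ : Fin (r+1)) ≤ ⟨t+1, by omega⟩ := by
          rw [Fin.mk_le_mk]
          omega
        have h2 := hmono _ _ hle μ hμ
        rw [hcmin t (by omega), hcmin (t+1) ht]
        exact h2
      · have e1 : min (t+1) r = r := by omega
        have e2 : min t r = r := by omega
        have : c (t+1) = c t := by
          rw [hc]
          dsimp only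
          congr 2
          ext
          simp [e1, e2]
        rw [this]
    have hAnn : ∀ t, 0 ≤ A t := by
      intro t
      rw [hA]
      dsimp only
      split_ifs with h
      · rw [hG]
        apply div_nonneg _ hqm1.le
        linarith [hc0r]
      · obtain ⟨t', rfl⟩ : ∃ t', t = t' + 1 := ⟨t - 1, by omega⟩
        have : G (t'+1) - G ((t'+1)-1) = (c t' - c (t'+1)) / ((q:ℝ)-1) := by
          rw [hG]
          dsimp only
          rw [show t'+1-1 = t' by omega]
          field_simp
          ring
        rw [this]
        apply div_nonneg _ hqm1.le
        linarith [hcmono t']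
    -- partial sums of A
    have hGsum : ∀ t : ℕ, ∑ j ∈ Finset.range (t+1), A j = G t := by
      intro t
      induction t with
      | zero =>
        rw [Finset.sum_range_one, hA]
        simp
      | succ t ih =>
        rw [Finset.sum_range_succ, ih, hA]
        dsimp only
        rw [if_neg (by omega : ¬ t + 1 = 0), show t+1-1 = t by omega]
        ring
    refine ⟨fun i => A i, fun i => hAnn i, fun x => ?_⟩
    rcases eq_or_ne x 0 with rfl | hx
    · rw [norm_zero D (hSnorm μ hμ)]
      have : ∀ i : Fin (r+1), D.latticeNorm (L i) 0 = 0 := fun i =>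
        latticeNorm_zero' D (ballS_zero_mem D hSnorm (y i))
      rw [Finset.sum_congr rfl (fun i _ => by rw [this i, mul_zero])]
      rw [Finset.sum_const, smul_zero]
    · -- x ≠ 0
      obtain ⟨k, hkw⟩ := exists_window D hSnorm hcomp hμ0 hy0 hx
      set w : Fin n → E := (unif D ^ k) • x with hwdef
      obtain ⟨i, hxi1, hxi2⟩ := hcov w hkw
      have hcomb : ∀ (m l : ℤ) (u : Fin n → E),
          (unif D ^ m) • ((unif D ^ l) • u) = (unif D ^ (m + l)) • u := by
        intro m l u
        rw [smul_smul, ← zpow_add₀ hπ]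
      have hxw : x = (unif D ^ (-k)) • w := by
        rw [hwdef, hcomb, neg_add_cancel, zpow_zero, one_smul]
      set iN : ℕ := (i : ℕ) with hiNdef
      have hiN : iN ≤ r := by omega
      -- value of each lattice norm at x
      have hLval : ∀ j : Fin (r+1), D.latticeNorm (L j) x =
          if (j:ℕ) ≤ iN then (q:ℝ)^k else (q:ℝ)^(k+1) := by
        intro j
        split_ifs with hj
        · -- j ≤ i
          have hji : j ≤ i := by
            rw [Fin.le_def]
            omega
          have hw_yj : leS S w (y j) := leS_trans hxi1 (hmono j i hji)
          have h1 : leS S x ((unif D ^ (-k)) • y j) := by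
            rw [hxw]
            exact leS_smul D hSnorm hw_yj
          have h2 : ¬ leS S x ((unif D ^ ((-k) + 1)) • y j) := by
            intro hcon
            have h3 := leS_smul D hSnorm (a := unif D ^ k) hcon
            rw [← hwdef, hcomb, show k + (-k + 1) = 1 by ring, zpow_one] at h3
            have h4 : leS S w (unif D • y0) :=
              leS_trans h3 (leS_smul D hSnorm (hywin j).2.1)
            exact hkw.2.2 h4
          rw [show L j = ballS S (y j) from rfl,
            latticeNorm_ballS D hSnorm hx (-k) h1 h2, neg_neg]
        · -- i < j
          have hij : i < j := by
            rw [Fin.lt_def]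
            omega
          have h1 : leS S x ((unif D ^ (-k-1)) • y j) := by
            have h3 : leS S ((unif D) • w) (y j) :=
              leS_trans (leS_smul D hSnorm hkw.2.1) (hwin_le j)
            have h4 := leS_smul D hSnorm (a := unif D ^ (-k-1)) h3
            rw [show (unif D ^ (-k-1)) • ((unif D) • w)
                = (unif D ^ (-k)) • w by
              rw [smul_smul, ← zpow_add_one₀ hπ, show -k-1+1 = -k by ring]] at h4
            rw [hxw]
            exact h4
          have h2 : ¬ leS S x ((unif D ^ ((-k-1) + 1)) • y j) := by
            intro hcon
            rw [show (-k-1) + 1 = -k by ring] at hcon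
            have h3 := leS_smul D hSnorm (a := unif D ^ k) hcon
            rw [← hwdef, hcomb, show k + -k = 0 by ring, zpow_zero, one_smul] at h3
            exact hstrict i j hij (leS_trans hxi2 h3)
          rw [show L j = ballS S (y j) from rfl,
            latticeNorm_ballS D hSnorm hx (-k-1) h1 h2,
            show -(-k-1) = k+1 by ring]
      -- value of μ at x
      have hμx : μ x = (q:ℝ)^k * c iN := by
        have e1 : μ w = μ (y i) :=
          le_antisymm (hxi1 μ hμ) (hxi2 μ hμ)
        have e2 : μ x = (q:ℝ)^k * μ w := by
          rw [hxw, (hSnorm μ hμ).1, v_unif_zpow, neg_neg]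
        have e3 : c iN = μ (y i) := by
          rw [hcmin iN hiN]
        rw [e2, e1, e3]
      -- the sum
      have hconv : ∑ j : Fin (r+1), A (j:ℕ) * D.latticeNorm (L j) x
          = ∑ t ∈ Finset.range (r+1),
              (A t * if t ≤ iN then (q:ℝ)^k else (q:ℝ)^(k+1)) := by
        rw [← Fin.sum_univ_eq_sum_range
          (fun t => A t * if t ≤ iN then (q:ℝ)^k else (q:ℝ)^(k+1)) (r+1)]
        apply Finset.sum_congr rfl
        intro j _
        rw [hLval j]
      rw [hμx, hconv]
      have hsplit : Finset.range (r+1) = Finset.Ico 0 (r+1) := by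
        rw [Finset.range_eq_Ico]
      rw [hsplit, ← Finset.sum_Ico_consecutive _
        (by omega : 0 ≤ iN + 1) (by omega : iN + 1 ≤ r + 1)]
      have hfirst : ∑ t ∈ Finset.Ico 0 (iN+1),
          (A t * if t ≤ iN then (q:ℝ)^k else (q:ℝ)^(k+1)) = G iN * (q:ℝ)^k := by
        rw [← Finset.range_eq_Ico]
        rw [Finset.sum_congr rfl (fun t ht => by
          rw [if_pos (by
            have := Finset.mem_range.1 ht
            omega)])]
        rw [← Finset.sum_mul, hGsum iN]
      have hsecond : ∑ t ∈ Finset.Ico (iN+1) (r+1),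
          (A t * if t ≤ iN then (q:ℝ)^k else (q:ℝ)^(k+1))
          = (G r - G iN) * (q:ℝ)^(k+1) := by
        rw [Finset.sum_congr rfl (fun t ht => by
          rw [if_neg (by
            have := (Finset.mem_Ico.1 ht).1
            omega)])]
        rw [← Finset.sum_mul]
        congr 1
        rw [Finset.sum_Ico_eq_sub _ (by omega : iN + 1 ≤ r + 1)]
        rw [hGsum r, hGsum iN]
      rw [hfirst, hsecond]
      have hGr : G r = c r := by
        rw [hG]
        dsimp only
        rw [show (q:ℝ) * c r - c r = ((q:ℝ)-1) * c r by ring]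
        field_simp
      rw [hGr, hG]
      dsimp only
      rw [zpow_add_one₀ hq0.ne']
      field_simp
      ring
end
end
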